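/- arXiv:2503.15053 — 7 statements merged into one kernel-verified Lean document; each statement's English description precedes it below -/
import Mathlib

section
/- In a separating tree T on [n], if i < j < k are nodes and there is an edge directed from k to i in T, then there exists a directed path in T from i to j or a directed path from j to k. -/
open Relation Finset

/-- The undirected simple graph underlying a directed edge relation. -/
def dirGraph {α : Type*} (E : α → α → Prop) : SimpleGraph α where
  Adj a b := a ≠ b ∧ (E a b ∨ E b a)
  symm := ⟨fun a b h => ⟨h.1.symm, h.2.symm⟩⟩
  loopless := ⟨fun a h => h.1 rfl⟩

/-- `x` lies in the subtree attached to `p` at `j`: every walk from `x` to `j`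
passes through `p`. -/
def inSub {α : Type*} (E : α → α → Prop) (j p x : α) : Prop :=
  ∀ w : (dirGraph E).Walk x j, p ∈ w.support

def atMostTwo {α : Type*} (s : Set α) : Prop :=
  ∀ a ∈ s, ∀ b ∈ s, ∀ c ∈ s, a = b ∨ a = c ∨ b = c

/-- A separating tree on `[n]`, encoded by its directed edge relation
(`E a b` means there is an edge directed from `a` to `b`, i.e. `b` is a parent of `a`). -/
def IsSepTree {n : ℕ} (E : Fin n → Fin n → Prop) : Prop :=
  (dirGraph E).IsTree ∧
  (∀ j, atMostTwo {p | E j p}) ∧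
  (∀ j, atMostTwo {c | E c j}) ∧
  (∀ j p₁ p₂, E j p₁ → E j p₂ → p₁ ≠ p₂ →
    ∀ x₁ x₂, inSub E j p₁ x₁ → inSub E j p₂ x₂ →
      (x₁ < j ∧ j < x₂) ∨ (x₂ < j ∧ j < x₁)) ∧
  (∀ j c₁ c₂, E c₁ j → E c₂ j → c₁ ≠ c₂ →
    ∀ x₁ x₂, inSub E j c₁ x₁ → inSub E j c₂ x₂ →
      (x₁ < j ∧ j < x₂) ∨ (x₂ < j ∧ j < x₁))

section Helpers

variable {n : ℕ} {E : Fin n → Fin n → Prop}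

/-- If `p` lies on a path from `x` to `y` in an acyclic graph, then every walk from `x`
to `y` passes through `p`. -/
lemma inSub_of_mem_path (hac : (dirGraph E).IsAcyclic) {x y p : Fin n}
    (w : (dirGraph E).Walk x y) (hw : w.IsPath) (hp : p ∈ w.support) : inSub E y p x := by
  intro w'
  have h := hac.path_unique ⟨w, hw⟩ w'.toPath
  have hval : w = (w'.toPath : (dirGraph E).Walk x y) := congrArg Subtype.val h
  exact w'.support_toPath_subset (hval ▸ hp)

lemma reflTransGen_of_forward : ∀ {a b : Fin n} (w : (dirGraph E).Walk a b),
    (∀ d ∈ w.darts, E d.fst d.snd) → Relation.ReflTransGen E a b := by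
  intro a b w
  induction w with
  | nil => exact fun _ => .refl
  | cons h p ih =>
    intro hd
    rw [SimpleGraph.Walk.darts_cons] at hd
    exact Relation.ReflTransGen.head (hd _ List.mem_cons_self)
      (ih (fun d hdm => hd d (List.mem_cons_of_mem _ hdm)))

lemma reflTransGen_of_backward : ∀ {a b : Fin n} (w : (dirGraph E).Walk a b),
    (∀ d ∈ w.darts, E d.snd d.fst) → Relation.ReflTransGen E b a := by
  intro a b w
  induction w with
  | nil => exact fun _ => .refl
  | cons h p ih =>
    intro hd
    rw [SimpleGraph.Walk.darts_cons] at hd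
    exact Relation.ReflTransGen.tail
      (ih (fun d hdm => hd d (List.mem_cons_of_mem _ hdm)))
      (hd _ List.mem_cons_self)

/-- Either all darts of a walk satisfy `P`, or there is a first dart violating `P`:
either it is the very first dart, or it is preceded by a dart satisfying `P`. -/
lemma walk_split (P : Fin n → Fin n → Prop) :
    ∀ {a b : Fin n} (w : (dirGraph E).Walk a b),
    (∀ d ∈ w.darts, P d.fst d.snd) ∨
    (∃ (c' : Fin n) (h : (dirGraph E).Adj a c') (w2 : (dirGraph E).Walk c' b),
        w = SimpleGraph.Walk.cons h w2 ∧ ¬ P a c') ∨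
    (∃ (p c c' : Fin n) (w1 : (dirGraph E).Walk a p) (h1 : (dirGraph E).Adj p c)
        (h2 : (dirGraph E).Adj c c') (w2 : (dirGraph E).Walk c' b),
        w = w1.append (SimpleGraph.Walk.cons h1 (SimpleGraph.Walk.cons h2 w2)) ∧
        P p c ∧ ¬ P c c') := by
  intro a b w
  induction w with
  | nil => left; simp
  | @cons a c₀ b h w' ih =>
    by_cases hP : P a c₀
    · rcases ih with hall | ⟨c', h', w2, heq, hnp⟩ | ⟨p, c, c', w1, h1, h2, w2, heq, hpc, hnp⟩
      · left
        intro d hd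
        rw [SimpleGraph.Walk.darts_cons] at hd
        rcases List.mem_cons.mp hd with rfl | hd
        · exact hP
        · exact hall d hd
      · right; right
        exact ⟨a, c₀, c', SimpleGraph.Walk.nil, h, h', w2,
          by rw [heq]; simp, hP, hnp⟩
      · right; right
        exact ⟨p, c, c', SimpleGraph.Walk.cons h w1, h1, h2, w2,
          by rw [heq]; simp [SimpleGraph.Walk.cons_append], hpc, hnp⟩
    · right; left
      exact ⟨c₀, h, w', rfl, hP⟩

/-- Case A: the path from `i` to `j` avoids `k`; then it is directed from `i` to `j`. -/
lemma caseA (hT : IsSepTree E) {i j k : Fin n} (hij : i < j) (hjk : j < k) (he : E k i)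
    (w : (dirGraph E).Walk i j) (hw : w.IsPath) (hk : k ∉ w.support) :
    Relation.ReflTransGen E i j := by
  have hac := hT.1.IsAcyclic
  rcases walk_split (E := E) E w with hall | ⟨c', h', w2, heq, hnp⟩ |
      ⟨p, c, c', w1, h1, h2, w2, heq, hpc, hnp⟩
  · exact reflTransGen_of_forward w hall
  · -- first dart of `w` is oriented backwards: `i` has children `k` and `c'`
    exfalso
    have hec : E c' i := (show i ≠ c' ∧ (E i c' ∨ E c' i) from h').2.resolve_left hnp
    have hne : k ≠ c' := by
      rintro rfl
      apply hk
      rw [heq, SimpleGraph.Walk.support_cons]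
      exact List.mem_cons_of_mem _ w2.start_mem_support
    have hsub1 : inSub E i k k := fun w' => w'.start_mem_support
    have hsub2 : inSub E i c' j := by
      refine inSub_of_mem_path hac w.reverse hw.reverse ?_
      rw [SimpleGraph.Walk.support_reverse, List.mem_reverse, heq,
        SimpleGraph.Walk.support_cons]
      exact List.mem_cons_of_mem _ w2.start_mem_support
    rcases hT.2.2.2.2 i k c' he hec hne k j hsub1 hsub2 with ⟨h1', h2'⟩ | ⟨h1', h2'⟩
    · exact absurd h1' (not_lt.2 (le_of_lt (hij.trans hjk)))
    · exact absurd h1' (not_lt.2 (le_of_lt hij))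
  · -- a "turn" at `c`: `c` has children `p` and `c'`
    exfalso
    have hec : E c' c := (show c ≠ c' ∧ (E c c' ∨ E c' c) from h2).2.resolve_left hnp
    -- rewrite `w` as `(w1.concat h1).append (cons h2 w2)`
    set w1' : (dirGraph E).Walk i c := w1.concat h1 with hw1'
    have heq' : w = w1'.append (SimpleGraph.Walk.cons h2 w2) := by
      rw [heq, hw1', SimpleGraph.Walk.concat_eq_append, ← SimpleGraph.Walk.append_assoc,
        SimpleGraph.Walk.cons_append, SimpleGraph.Walk.nil_append]
    have hw1'path : w1'.IsPath := SimpleGraph.Walk.IsPath.of_append_left (heq' ▸ hw)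
    have hpw1' : p ∈ w1'.support := by
      rw [hw1', SimpleGraph.Walk.support_concat]
      exact List.mem_append_left _ w1.end_mem_support
    have hcw2 : c' ∈ (SimpleGraph.Walk.cons h2 w2).support := by
      rw [SimpleGraph.Walk.support_cons]
      exact List.mem_cons_of_mem _ w2.start_mem_support
    -- `p ≠ c'`
    have hnodup := (heq' ▸ hw).support_nodup
    rw [SimpleGraph.Walk.support_append, List.nodup_append] at hnodup
    have hne : p ≠ c' := by
      rintro rfl
      refine hnodup.2.2 _ hpw1' _ ?_ rfl
      rw [SimpleGraph.Walk.support_cons, List.tail_cons]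
      exact w2.start_mem_support
    -- `i` and `k` are in the subtree of child `p`, `j` in the subtree of child `c'`
    have hsubi : inSub E c p i := inSub_of_mem_path hac w1' hw1'path hpw1'
    have hsubk : inSub E c p k := by
      have hki : (dirGraph E).Adj k i := (show k ≠ i ∧ (E k i ∨ E i k) from ⟨(hij.trans hjk).ne', Or.inl he⟩)
      have hknotin : k ∉ w1'.support := fun hmem => hk (by
        rw [heq']
        exact SimpleGraph.Walk.subset_support_append_left _ _ hmem)
      refine inSub_of_mem_path hac (SimpleGraph.Walk.cons hki w1')
        (hw1'path.cons hknotin) ?_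
      rw [SimpleGraph.Walk.support_cons]
      exact List.mem_cons_of_mem _ hpw1'
    have hsubj : inSub E c c' j := by
      refine inSub_of_mem_path hac (SimpleGraph.Walk.cons h2 w2).reverse
        (SimpleGraph.Walk.IsPath.of_append_right (heq' ▸ hw)).reverse ?_
      rw [SimpleGraph.Walk.support_reverse, List.mem_reverse]
      exact hcw2
    have s1 := hT.2.2.2.2 c p c' hpc hec hne i j hsubi hsubj
    have s2 := hT.2.2.2.2 c p c' hpc hec hne k j hsubk hsubj
    have hicj : i < c ∧ c < j := by
      rcases s1 with h | ⟨ha, hb⟩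
      · exact h
      · exact absurd (ha.trans hb) (not_lt.2 hij.le)
    rcases s2 with ⟨ha, hb⟩ | ⟨ha, hb⟩
    · exact absurd (ha.trans hb) (not_lt.2 hjk.le)
    · exact absurd hicj.2 (asymm ha)

/-- Case B: the path from `i` to `j` passes through `k`; then the part from `k` to `j`
is directed from `j` to `k`. -/
lemma caseB (hT : IsSepTree E) {i j k : Fin n} (hij : i < j) (hjk : j < k) (he : E k i)
    (wik : (dirGraph E).Walk i k) (w : (dirGraph E).Walk k j)
    (hfull : (wik.append w).IsPath) :
    Relation.ReflTransGen E j k := by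
  have hac := hT.1.IsAcyclic
  have hw : w.IsPath := SimpleGraph.Walk.IsPath.of_append_right hfull
  rcases walk_split (E := E) (fun a b => E b a) w with hall | ⟨c', h', w2, heq, hnp⟩ |
      ⟨p, c, c', w1, h1, h2, w2, heq, hpc, hnp⟩
  · exact reflTransGen_of_backward w hall
  · -- first dart out of `k` is oriented away from `k`: `k` has parents `i` and `c'`
    exfalso
    have hec : E k c' := (show k ≠ c' ∧ (E k c' ∨ E c' k) from h').2.resolve_right hnp
    have hne : i ≠ c' := by
      rintro rfl
      have hnodup := hfull.support_nodup
      rw [SimpleGraph.Walk.support_append, List.nodup_append] at hnodup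
      refine hnodup.2.2 _ wik.start_mem_support _ ?_ rfl
      rw [heq, SimpleGraph.Walk.support_cons, List.tail_cons]
      exact w2.start_mem_support
    have hsub1 : inSub E k i i := fun w' => w'.start_mem_support
    have hsub2 : inSub E k c' j := by
      refine inSub_of_mem_path hac w.reverse hw.reverse ?_
      rw [SimpleGraph.Walk.support_reverse, List.mem_reverse, heq,
        SimpleGraph.Walk.support_cons]
      exact List.mem_cons_of_mem _ w2.start_mem_support
    rcases hT.2.2.2.1 k i c' he hec hne i j hsub1 hsub2 with ⟨h1', h2'⟩ | ⟨h1', h2'⟩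
    · exact absurd h2' (not_lt.2 (le_of_lt hjk))
    · exact absurd h2' (not_lt.2 (le_of_lt (hij.trans hjk)))
  · -- a "turn" at `c`: `c` has parents `p` and `c'`
    exfalso
    have hec : E c c' := (show c ≠ c' ∧ (E c c' ∨ E c' c) from h2).2.resolve_right hnp
    have hep : E c p := hpc
    set w1' : (dirGraph E).Walk k c := w1.concat h1 with hw1'
    have heq' : w = w1'.append (SimpleGraph.Walk.cons h2 w2) := by
      rw [heq, hw1', SimpleGraph.Walk.concat_eq_append, ← SimpleGraph.Walk.append_assoc,
        SimpleGraph.Walk.cons_append, SimpleGraph.Walk.nil_append]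
    have hw1'path : w1'.IsPath := SimpleGraph.Walk.IsPath.of_append_left (heq' ▸ hw)
    have hpw1' : p ∈ w1'.support := by
      rw [hw1', SimpleGraph.Walk.support_concat]
      exact List.mem_append_left _ w1.end_mem_support
    -- `p ≠ c'`
    have hnodup := (heq' ▸ hw).support_nodup
    rw [SimpleGraph.Walk.support_append, List.nodup_append] at hnodup
    have hne : p ≠ c' := by
      rintro rfl
      refine hnodup.2.2 _ hpw1' _ ?_ rfl
      rw [SimpleGraph.Walk.support_cons, List.tail_cons]
      exact w2.start_mem_support
    -- `i` and `k` are in the subtree of parent `p`, `j` in the subtree of parent `c'`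
    have hsubk : inSub E c p k := inSub_of_mem_path hac w1' hw1'path hpw1'
    have hsubi : inSub E c p i := by
      have hwi : (wik.append w1').IsPath := by
        refine SimpleGraph.Walk.IsPath.of_append_left
          (q := SimpleGraph.Walk.cons h2 w2) ?_
        rw [← SimpleGraph.Walk.append_assoc, ← heq']
        exact hfull
      refine inSub_of_mem_path hac (wik.append w1') hwi ?_
      exact SimpleGraph.Walk.subset_support_append_right _ _ hpw1'
    have hsubj : inSub E c c' j := by
      refine inSub_of_mem_path hac (SimpleGraph.Walk.cons h2 w2).reverse
        (SimpleGraph.Walk.IsPath.of_append_right (heq' ▸ hw)).reverse ?_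
      rw [SimpleGraph.Walk.support_reverse, List.mem_reverse,
        SimpleGraph.Walk.support_cons]
      exact List.mem_cons_of_mem _ w2.start_mem_support
    have s1 := hT.2.2.2.1 c p c' hep hec hne k j hsubk hsubj
    have s2 := hT.2.2.2.1 c p c' hep hec hne i j hsubi hsubj
    have hjck : j < c ∧ c < k := by
      rcases s1 with ⟨ha, hb⟩ | ⟨ha, hb⟩
      · exact absurd (ha.trans hb) (not_lt.2 hjk.le)
      · exact ⟨ha, hb⟩
    rcases s2 with ⟨ha, hb⟩ | ⟨ha, hb⟩
    · exact absurd hb (asymm hjck.1)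
    · exact absurd (hjck.1.trans hb) (not_lt.2 hij.le)

end Helpers

/-- In a separating tree `T` on `[n]`, if `i < j < k` and there is an
edge directed from `k` to `i`, then there is a directed path from `i` to `j` or a
directed path from `j` to `k`. -/
theorem stmt0 {n : ℕ} (E : Fin n → Fin n → Prop) (hT : IsSepTree E)
    (i j k : Fin n) (hij : i < j) (hjk : j < k) (he : E k i) :
    Relation.ReflTransGen E i j ∨ Relation.ReflTransGen E j k := by
  classical
  obtain ⟨w₀⟩ := hT.1.isConnected.preconnected i j
  set w : (dirGraph E).Walk i j := (w₀.toPath : (dirGraph E).Walk i j) with hwdef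
  have hw : w.IsPath := w₀.toPath.2
  by_cases hk : k ∈ w.support
  · right
    exact caseB hT hij hjk he (w.takeUntil k hk) (w.dropUntil k hk)
      (by rw [SimpleGraph.Walk.take_spec]; exact hw)
  · left
    exact caseA hT hij hjk he w hw hk
end

section
/- In a separating tree T on [n], if i < j < k are nodes and there is an edge directed from i to k in T, then there exists a directed path in T from j to i or a directed path from k to j. -/
open Relation Finset

/-- If `p` lies on a path from `a` to `b` in an acyclic graph, then every walk from
`a` to `b` passes through `p`. -/
lemma cut_lemma {n : ℕ} {E : Fin n → Fin n → Prop} (hac : (dirGraph E).IsAcyclic)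
    {a b p : Fin n} (P : (dirGraph E).Walk a b) (hP : P.IsPath) (hp : p ∈ P.support) :
    inSub E b p a := by
  intro w
  have h1 : (⟨P, hP⟩ : (dirGraph E).Path a b) = w.toPath := hac.path_unique _ _
  have h2 : p ∈ (w.toPath : (dirGraph E).Walk a b).support := by
    rw [← h1]; exact hp
  exact w.support_toPath_subset h2

/-- Walking forward (all edges directed away from `j`) along a tree path towards `e`. -/
lemma sep_fwd {n : ℕ} {E : Fin n → Fin n → Prop} (hT : IsSepTree E) {i j k : Fin n}
    (hij : i < j) (hjk : j < k) (he : E i k) :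
    ∀ {a e : Fin n} (Q : (dirGraph E).Walk a e) {f : Fin n},
      (dirGraph E).Adj f e → ((e = i ∧ f = k) ∨ (e = k ∧ f = i)) →
      ∀ (R : (dirGraph E).Walk j a),
      (R.append Q).IsPath → f ∉ R.support → f ∉ Q.support →
      Relation.ReflTransGen E j a → (∃ p ∈ R.support, p ≠ a ∧ E p a) →
      Relation.ReflTransGen E j e ∧ ∃ p, E p e ∧ p ≠ f ∧ inSub E e p j := by
  intro a e Q
  induction Q with
  | nil =>
    intro f hef hval R hpath hfR hfQ hrt hp
    obtain ⟨p, hpR, hpa, hpE⟩ := hp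
    rw [SimpleGraph.Walk.append_nil] at hpath
    exact ⟨hrt, p, hpE, fun hh => hfR (hh ▸ hpR), cut_lemma hT.1.2 R hpath hpR⟩
  | @cons u v w h Q' ih =>
    intro f hef hval R hpath hfR hfQ hrt hp
    obtain ⟨p, hpR, hpu, hpE⟩ := hp
    have hQpath : (SimpleGraph.Walk.cons h Q').IsPath := hpath.of_append_right
    have hRpath : R.IsPath := hpath.of_append_left
    have hvmem : v ∈ (SimpleGraph.Walk.cons h Q').support := by
      rw [SimpleGraph.Walk.support_cons]
      exact List.mem_cons_of_mem _ Q'.start_mem_support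
    rcases h.2 with hab | hba
    · -- edge u → v is forward; continue
      refine ih hef hval (R.concat h) ?_ ?_ ?_ (hrt.tail hab) ?_
      · rwa [SimpleGraph.Walk.concat_append]
      · rw [SimpleGraph.Walk.support_concat]
        intro hf
        have hf' : f ∈ R.support ∨ f = v := by simpa [List.concat_eq_append] using hf
        rcases hf' with hf | rfl
        · exact hfR hf
        · exact hfQ hvmem
      · intro hf
        apply hfQ
        rw [SimpleGraph.Walk.support_cons]
        exact List.mem_cons_of_mem _ hf
      · refine ⟨u, ?_, h.ne, hab⟩
        rw [SimpleGraph.Walk.support_concat]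
        simp [List.concat_eq_append, R.end_mem_support]
    · -- edge directed v → u : vertex u has two children, contradiction
      exfalso
      have hpb : p ≠ v := by
        intro hh; subst hh
        have hnd : (R.append (SimpleGraph.Walk.cons h Q')).support.Nodup :=
          (SimpleGraph.Walk.isPath_def _).mp hpath
        rw [SimpleGraph.Walk.support_append, SimpleGraph.Walk.support_cons] at hnd
        exact (List.disjoint_of_nodup_append hnd) hpR Q'.start_mem_support
      have hbmem : v ∈ (SimpleGraph.Walk.cons h Q').reverse.support := by
        rw [SimpleGraph.Walk.support_reverse]
        exact List.mem_reverse.mpr hvmem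
      have h1 : inSub E u p j := cut_lemma hT.1.2 R hRpath hpR
      have h2 : inSub E u v w :=
        cut_lemma hT.1.2 (SimpleGraph.Walk.cons h Q').reverse hQpath.reverse hbmem
      have h3 : inSub E u v f := by
        have hW : (SimpleGraph.Walk.cons hef (SimpleGraph.Walk.cons h Q').reverse).IsPath := by
          rw [SimpleGraph.Walk.cons_isPath_iff]
          refine ⟨hQpath.reverse, ?_⟩
          rw [SimpleGraph.Walk.support_reverse]
          exact fun hh => hfQ (List.mem_reverse.mp hh)
        refine cut_lemma hT.1.2 _ hW ?_
        rw [SimpleGraph.Walk.support_cons]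
        exact List.mem_cons_of_mem _ hbmem
      have sep := hT.2.2.2.2 u p v hpE hba hpb
      have d1 := sep j w h1 h2
      have d2 := sep j f h1 h3
      rcases hval with ⟨rfl, rfl⟩ | ⟨rfl, rfl⟩ <;>
      · simp only [Fin.lt_def] at d1 d2 hij hjk
        omega

/-- Walking backward (all edges directed towards `j`) along a tree path towards `e`. -/
lemma sep_bwd {n : ℕ} {E : Fin n → Fin n → Prop} (hT : IsSepTree E) {i j k : Fin n}
    (hij : i < j) (hjk : j < k) (he : E i k) :
    ∀ {a e : Fin n} (Q : (dirGraph E).Walk a e) {f : Fin n},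
      (dirGraph E).Adj f e → ((e = i ∧ f = k) ∨ (e = k ∧ f = i)) →
      ∀ (R : (dirGraph E).Walk j a),
      (R.append Q).IsPath → f ∉ R.support → f ∉ Q.support →
      Relation.ReflTransGen E a j → (∃ p ∈ R.support, p ≠ a ∧ E a p) →
      Relation.ReflTransGen E e j ∧ ∃ p, E e p ∧ p ≠ f ∧ inSub E e p j := by
  intro a e Q
  induction Q with
  | nil =>
    intro f hef hval R hpath hfR hfQ hrt hp
    obtain ⟨p, hpR, hpa, hpE⟩ := hp
    rw [SimpleGraph.Walk.append_nil] at hpath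
    exact ⟨hrt, p, hpE, fun hh => hfR (hh ▸ hpR), cut_lemma hT.1.2 R hpath hpR⟩
  | @cons u v w h Q' ih =>
    intro f hef hval R hpath hfR hfQ hrt hp
    obtain ⟨p, hpR, hpu, hpE⟩ := hp
    have hQpath : (SimpleGraph.Walk.cons h Q').IsPath := hpath.of_append_right
    have hRpath : R.IsPath := hpath.of_append_left
    have hvmem : v ∈ (SimpleGraph.Walk.cons h Q').support := by
      rw [SimpleGraph.Walk.support_cons]
      exact List.mem_cons_of_mem _ Q'.start_mem_support
    rcases h.2 with hab | hba
    · -- edge directed u → v : vertex u has two parents, contradiction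
      exfalso
      have hpb : p ≠ v := by
        intro hh; subst hh
        have hnd : (R.append (SimpleGraph.Walk.cons h Q')).support.Nodup :=
          (SimpleGraph.Walk.isPath_def _).mp hpath
        rw [SimpleGraph.Walk.support_append, SimpleGraph.Walk.support_cons] at hnd
        exact (List.disjoint_of_nodup_append hnd) hpR Q'.start_mem_support
      have hbmem : v ∈ (SimpleGraph.Walk.cons h Q').reverse.support := by
        rw [SimpleGraph.Walk.support_reverse]
        exact List.mem_reverse.mpr hvmem
      have h1 : inSub E u p j := cut_lemma hT.1.2 R hRpath hpR
      have h2 : inSub E u v w :=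
        cut_lemma hT.1.2 (SimpleGraph.Walk.cons h Q').reverse hQpath.reverse hbmem
      have h3 : inSub E u v f := by
        have hW : (SimpleGraph.Walk.cons hef (SimpleGraph.Walk.cons h Q').reverse).IsPath := by
          rw [SimpleGraph.Walk.cons_isPath_iff]
          refine ⟨hQpath.reverse, ?_⟩
          rw [SimpleGraph.Walk.support_reverse]
          exact fun hh => hfQ (List.mem_reverse.mp hh)
        refine cut_lemma hT.1.2 _ hW ?_
        rw [SimpleGraph.Walk.support_cons]
        exact List.mem_cons_of_mem _ hbmem
      have sep := hT.2.2.2.1 u p v hpE hab hpb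
      have d1 := sep j w h1 h2
      have d2 := sep j f h1 h3
      rcases hval with ⟨rfl, rfl⟩ | ⟨rfl, rfl⟩ <;>
      · simp only [Fin.lt_def] at d1 d2 hij hjk
        omega
    · -- edge directed v → u; continue
      refine ih hef hval (R.concat h) ?_ ?_ ?_ (Relation.ReflTransGen.head hba hrt) ?_
      · rwa [SimpleGraph.Walk.concat_append]
      · rw [SimpleGraph.Walk.support_concat]
        intro hf
        have hf' : f ∈ R.support ∨ f = v := by simpa [List.concat_eq_append] using hf
        rcases hf' with hf | rfl
        · exact hfR hf
        · exact hfQ hvmem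
      · intro hf
        apply hfQ
        rw [SimpleGraph.Walk.support_cons]
        exact List.mem_cons_of_mem _ hf
      · refine ⟨u, ?_, h.ne, hba⟩
        rw [SimpleGraph.Walk.support_concat]
        simp [List.concat_eq_append, R.end_mem_support]

/-- Given the tree path from `j` to `e`, either all its edges point away from `j`
or all its edges point towards `j`, with extra information on the last edge. -/
lemma sep_run {n : ℕ} {E : Fin n → Fin n → Prop} (hT : IsSepTree E) {i j k : Fin n}
    (hij : i < j) (hjk : j < k) (he : E i k) {e f : Fin n}
    (hef : (dirGraph E).Adj f e)
    (hval : (e = i ∧ f = k) ∨ (e = k ∧ f = i))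
    (S : (dirGraph E).Walk j e) (hS : S.IsPath) (hfS : f ∉ S.support) (hje : j ≠ e) :
    (Relation.ReflTransGen E j e ∧ ∃ p, E p e ∧ p ≠ f ∧ inSub E e p j) ∨
    (Relation.ReflTransGen E e j ∧ ∃ p, E e p ∧ p ≠ f ∧ inSub E e p j) := by
  cases S with
  | nil => exact absurd rfl hje
  | @cons _ b _ h S' =>
    have hpath : ((SimpleGraph.Walk.cons h SimpleGraph.Walk.nil).append S').IsPath := by
      rw [SimpleGraph.Walk.cons_append, SimpleGraph.Walk.nil_append]; exact hS
    have hbmem : b ∈ (SimpleGraph.Walk.cons h S').support := by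
      rw [SimpleGraph.Walk.support_cons]
      exact List.mem_cons_of_mem _ S'.start_mem_support
    have hfR : f ∉ (SimpleGraph.Walk.cons h (SimpleGraph.Walk.nil : (dirGraph E).Walk b b)).support := by
      intro hf
      have hfjb : f = j ∨ f = b := by
        simpa [SimpleGraph.Walk.support_cons, SimpleGraph.Walk.support_nil] using hf
      rcases hfjb with rfl | rfl
      · exact hfS ((SimpleGraph.Walk.cons h S').start_mem_support)
      · exact hfS hbmem
    have hfQ : f ∉ S'.support := by
      intro hf
      apply hfS
      rw [SimpleGraph.Walk.support_cons]
      exact List.mem_cons_of_mem _ hf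
    have hjR : j ∈ (SimpleGraph.Walk.cons h (SimpleGraph.Walk.nil : (dirGraph E).Walk b b)).support := by
      simp [SimpleGraph.Walk.support_cons]
    rcases h.2 with hjb | hbj
    · exact Or.inl (sep_fwd hT hij hjk he S' hef hval _ hpath hfR hfQ
        (Relation.ReflTransGen.single hjb) ⟨j, hjR, h.ne, hjb⟩)
    · exact Or.inr (sep_bwd hT hij hjk he S' hef hval _ hpath hfR hfQ
        (Relation.ReflTransGen.single hbj) ⟨j, hjR, h.ne, hbj⟩)

/-- In a separating tree `T` on `[n]`, if `i < j < k` and there is an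
edge directed from `i` to `k`, then there is a directed path from `j` to `i` or a
directed path from `k` to `j`. -/
theorem stmt1 {n : ℕ} (E : Fin n → Fin n → Prop) (hT : IsSepTree E)
    (i j k : Fin n) (hij : i < j) (hjk : j < k) (he : E i k) :
    Relation.ReflTransGen E j i ∨ Relation.ReflTransGen E k j := by
  have hik : i < k := hij.trans hjk
  obtain ⟨P, hP, -⟩ := hT.1.existsUnique_path j i
  by_cases hk : k ∈ P.support
  · -- the tree path from j to i passes through k; use the path from j to k
    have hS := hP.takeUntil hk
    have hiS : i ∉ (P.takeUntil k hk).support := by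
      intro hi
      have hnd : P.support.Nodup := (SimpleGraph.Walk.isPath_def _).mp hP
      rw [← P.take_spec hk, SimpleGraph.Walk.support_append] at hnd
      have hdisj := List.disjoint_of_nodup_append hnd
      have hie : i ∈ (P.dropUntil k hk).support := SimpleGraph.Walk.end_mem_support _
      rw [SimpleGraph.Walk.support_eq_cons] at hie
      rcases List.mem_cons.mp hie with heq | htl
      · exact hik.ne heq
      · exact hdisj hi htl
    have hadj : (dirGraph E).Adj i k := ⟨hik.ne, Or.inl he⟩
    rcases sep_run hT hij hjk he hadj (Or.inr ⟨rfl, rfl⟩) (P.takeUntil k hk) hS hiS hjk.ne with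
      ⟨hrt, p, hpk, hpi, hsub⟩ | ⟨hrt, -⟩
    · exfalso
      have hcon := hT.2.2.2.2 k p i hpk he hpi j i hsub (fun w => w.start_mem_support)
      simp only [Fin.lt_def] at hcon hij hjk
      omega
    · exact Or.inr hrt
  · -- the tree path from j to i avoids k
    have hadj : (dirGraph E).Adj k i := ⟨hik.ne', Or.inr he⟩
    rcases sep_run hT hij hjk he hadj (Or.inl ⟨rfl, rfl⟩) P hP hk hij.ne' with
      ⟨hrt, -⟩ | ⟨hrt, p, hip, hpk, hsub⟩
    · exact Or.inl hrt
    · exfalso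
      have hcon := hT.2.2.2.1 i p k hip he hpk j k hsub (fun w => w.start_mem_support)
      simp only [Fin.lt_def] at hcon hij hjk
      omega
end

section
/- Let T be a separating tree on [n] and let j be a node of T with two ancestor subtrees L and R satisfying L < R (every element of L is less than every element of R). Set M = max(L) and m = min(R). Then for every k with M < k < m, there is a directed path in T from k to j. -/
open Relation Finset

section Aux

open SimpleGraph SimpleGraph.Walk

/-- In an acyclic graph, the support of a path between two vertices is contained in the
support of any walk between the same two vertices. -/
private lemma walk_support {V : Type*} [DecidableEq V] {G : SimpleGraph V} (hac : G.IsAcyclic) {x y : V}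
    {p : G.Walk x y} (hp : p.IsPath) (w : G.Walk x y) : p.support ⊆ w.support := by
  have h := hac.path_unique ⟨w.bypass, w.bypass_isPath⟩ ⟨p, hp⟩
  have hb : w.bypass = p := congrArg Subtype.val h
  rw [← hb]
  exact w.support_bypass_subset

/-- Bridge lemma: if `p` is adjacent to `j`, every walk from `x` to `j` passes through `p`,
and `S = cons hadj S'` is a path from `u` to `j` avoiding `p` whose second vertex is `c`,
then every walk from `x` to `u` passes through `c`. -/
private lemma bridge_side {V : Type*} [DecidableEq V] {G : SimpleGraph V} (hac : G.IsAcyclic)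
    {j p x u c : V} (hpj : G.Adj p j)
    (hx : ∀ w : G.Walk x j, p ∈ w.support)
    (hadj : G.Adj u c) (S' : G.Walk c j) (hS : (Walk.cons hadj S').IsPath)
    (hpS : p ∉ (Walk.cons hadj S').support)
    (w : G.Walk x u) : c ∈ w.support := by
  by_contra hc
  have h1 : p ∈ (w.append (Walk.cons hadj S')).support := hx _
  have hp_w : p ∈ w.support := by
    rcases (Walk.mem_support_append_iff _ _).mp h1 with h | h
    · exact h
    · exact absurd h hpS
  have hbr : G.IsBridge s(p, j) :=
    isAcyclic_iff_forall_edge_isBridge.mp hac (G.mem_edgeSet.mpr hpj)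
  have hall := isBridge_iff_adj_and_forall_walk_mem_edges.mp hbr
  have hW2 : s(p, j) ∈ ((w.dropUntil p hp_w).append (Walk.cons hadj S')).edges := hall _
  rw [Walk.edges_append, List.mem_append] at hW2
  rcases hW2 with hA | hB
  · have hjw : j ∈ w.support :=
      Walk.support_dropUntil_subset w hp_w (Walk.snd_mem_support_of_mem_edges _ hA)
    have hcin : c ∈ (w.dropUntil j hjw).support := by
      apply walk_support hac hS.reverse (w.dropUntil j hjw)
      rw [Walk.support_reverse, List.mem_reverse, Walk.support_cons]
      exact List.mem_cons_of_mem _ S'.start_mem_support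
    exact hc (Walk.support_dropUntil_subset w hjw hcin)
  · exact hpS (Walk.fst_mem_support_of_mem_edges _ hB)

private lemma num_contra {n : ℕ} {M m k u : Fin n} (hMk : M < k) (hkm : k < m)
    (s1 : (k < u ∧ u < M) ∨ (M < u ∧ u < k))
    (s2 : (k < u ∧ u < m) ∨ (m < u ∧ u < k)) : False := by
  rcases s1 with ⟨h1, h2⟩ | ⟨h1, h2⟩ <;> rcases s2 with ⟨h3, h4⟩ | ⟨h3, h4⟩ <;>
    simp only [Fin.lt_def] at * <;> omega

private lemma main_ind {n : ℕ} {E : Fin n → Fin n → Prop} (hT : IsSepTree E)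
    {j p₁ p₂ M m k : Fin n} (hp₁ : E j p₁) (hp₂ : E j p₂) (hne : p₁ ≠ p₂)
    (hadj1 : (dirGraph E).Adj p₁ j) (hadj2 : (dirGraph E).Adj p₂ j)
    (hM : inSub E j p₁ M) (hm : inSub E j p₂ m)
    (hMk : M < k) (hkm : k < m) :
    ∀ (N : ℕ) {u : Fin n} (P : (dirGraph E).Walk u j) {a : Fin n}
      (Q : (dirGraph E).Walk k a) (h : (dirGraph E).Adj a u),
      P.length ≤ N →
      (Q.append (Walk.cons h P)).IsPath →
      p₁ ∉ (Q.append (Walk.cons h P)).support →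
      p₂ ∉ (Q.append (Walk.cons h P)).support →
      (E a u → Relation.ReflTransGen E u j) ∧ (E u a → False) := by
  have hac : (dirGraph E).IsAcyclic := hT.1.IsAcyclic
  intro N
  induction N with
  | zero =>
    intro u P a Q h hlen hpath h1 h2
    cases P with
    | nil =>
      constructor
      · intro _
        exact ReflTransGen.refl
      · intro hEja
        have htwo := hT.2.1 j a (by exact hEja) p₁ (by exact hp₁) p₂ (by exact hp₂)
        have ha_mem : a ∈ (Q.append (Walk.cons h Walk.nil)).support :=
          (Walk.mem_support_append_iff _ _).mpr (Or.inl Q.end_mem_support)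
        rcases htwo with rfl | rfl | hc
        · exact absurd ha_mem h1
        · exact absurd ha_mem h2
        · exact hne hc
    | cons hadj P'' => simp [Walk.length_cons] at hlen
  | succ N ihN =>
    intro u P a Q h hlen hpath h1 h2
    cases P with
    | nil =>
      constructor
      · intro _
        exact ReflTransGen.refl
      · intro hEja
        have htwo := hT.2.1 j a (by exact hEja) p₁ (by exact hp₁) p₂ (by exact hp₂)
        have ha_mem : a ∈ (Q.append (Walk.cons h Walk.nil)).support :=
          (Walk.mem_support_append_iff _ _).mpr (Or.inl Q.end_mem_support)
        rcases htwo with rfl | rfl | hc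
        · exact absurd ha_mem h1
        · exact absurd ha_mem h2
        · exact hne hc
    | @cons _ c _ hadj P'' =>
      have hlen' : P''.length ≤ N := by
        rw [Walk.length_cons] at hlen
        omega
      have hW2 : ((Q.concat h).append (Walk.cons hadj P'')) =
          (Q.append (Walk.cons h (Walk.cons hadj P''))) := Walk.concat_append _ _ _
      have hpath' : ((Q.concat h).append (Walk.cons hadj P'')).IsPath := by
        rw [hW2]; exact hpath
      have h1' : p₁ ∉ ((Q.concat h).append (Walk.cons hadj P'')).support := by
        rw [hW2]; exact h1
      have h2' : p₂ ∉ ((Q.concat h).append (Walk.cons hadj P'')).support := by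
        rw [hW2]; exact h2
      have hSpath : (Walk.cons hadj P'').IsPath := hpath'.of_append_right
      have h1S : p₁ ∉ (Walk.cons hadj P'').support := by
        intro hmem
        exact h1' ((Walk.mem_support_append_iff _ _).mpr (Or.inr hmem))
      have h2S : p₂ ∉ (Walk.cons hadj P'').support := by
        intro hmem
        exact h2' ((Walk.mem_support_append_iff _ _).mpr (Or.inr hmem))
      -- `k` lies on the `a`-side of `u`
      have hak : inSub E u a k := by
        intro w
        have hQ'path : (Q.concat h).IsPath := hpath'.of_append_left
        apply walk_support hac hQ'path w
        rw [Walk.support_concat, List.mem_append]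
        exact Or.inl Q.end_mem_support
      -- `M` and `m` lie on the `c`-side of `u`
      have hMside : inSub E u c M := fun w =>
        bridge_side hac hadj1 hM hadj P'' hSpath h1S w
      have hmside : inSub E u c m := fun w =>
        bridge_side hac hadj2 hm hadj P'' hSpath h2S w
      have hac_ne : a ≠ c := by
        intro hEq
        cases hEq
        have hnodup : (Q.append (Walk.cons h (Walk.cons hadj P''))).support.Nodup :=
          hpath.support_nodup
        rw [Walk.support_append] at hnodup
        apply List.disjoint_of_nodup_append hnodup Q.end_mem_support
        rw [Walk.support_cons, List.tail_cons, Walk.support_cons]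
        exact List.mem_cons_of_mem _ P''.start_mem_support
      have contra : (E u a ∧ E u c) ∨ (E a u ∧ E c u) → False := by
        rintro (⟨hua, huc⟩ | ⟨hau, hcu⟩)
        · exact num_contra hMk hkm
            (hT.2.2.2.1 u a c hua huc hac_ne k M hak hMside)
            (hT.2.2.2.1 u a c hua huc hac_ne k m hak hmside)
        · exact num_contra hMk hkm
            (hT.2.2.2.2 u a c hau hcu hac_ne k M hak hMside)
            (hT.2.2.2.2 u a c hau hcu hac_ne k m hak hmside)
      constructor
      · intro hEau
        rcases hadj.2 with hEuc | hEcu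
        · exact ReflTransGen.head hEuc
            ((ihN P'' (Q.concat h) hadj hlen' hpath' h1' h2').1 hEuc)
        · exact (contra (Or.inr ⟨hEau, hEcu⟩)).elim
      · intro hEua
        rcases hadj.2 with hEuc | hEcu
        · exact contra (Or.inl ⟨hEua, hEuc⟩)
        · exact (ihN P'' (Q.concat h) hadj hlen' hpath' h1' h2').2 hEcu

end Aux

/-- Let `j` be a node of a separating tree with two ancestor subtrees
`L` (attached to the parent `p₁`) and `R` (attached to the parent `p₂`) with `L < R`,
`M = max L` and `m = min R`. Then for every `k` with `M < k < m` there is a directed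
path from `k` to `j`. -/
theorem stmt2 {n : ℕ} (E : Fin n → Fin n → Prop) (hT : IsSepTree E)
    (j p₁ p₂ : Fin n) (hp₁ : E j p₁) (hp₂ : E j p₂) (hne : p₁ ≠ p₂)
    (M m : Fin n)
    (hM : inSub E j p₁ M) (hMmax : ∀ x, inSub E j p₁ x → x ≤ M)
    (hm : inSub E j p₂ m) (hmmin : ∀ x, inSub E j p₂ x → m ≤ x)
    (hLR : ∀ x y, inSub E j p₁ x → inSub E j p₂ y → x < y) :
    ∀ k, M < k → k < m → Relation.ReflTransGen E k j := by
  intro k hMk hkm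
  have hac : (dirGraph E).IsAcyclic := hT.1.IsAcyclic
  have hconn : (dirGraph E).Connected := hT.1.isConnected
  have hp1j_ne : p₁ ≠ j := by
    intro hEq
    subst hEq
    exact absurd (hLR m m (fun w => w.end_mem_support) hm) (lt_irrefl m)
  have hp2j_ne : p₂ ≠ j := by
    intro hEq
    subst hEq
    exact absurd (hLR M M hM (fun w => w.end_mem_support)) (lt_irrefl M)
  have hadj1 : (dirGraph E).Adj p₁ j := ⟨hp1j_ne, Or.inr hp₁⟩
  have hadj2 : (dirGraph E).Adj p₂ j := ⟨hp2j_ne, Or.inr hp₂⟩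
  obtain ⟨w0⟩ := hconn.preconnected k j
  obtain ⟨P0, hP0path, h1, h2⟩ :
      ∃ P0 : (dirGraph E).Walk k j, P0.IsPath ∧ p₁ ∉ P0.support ∧ p₂ ∉ P0.support := by
    refine ⟨w0.bypass, w0.bypass_isPath, ?_, ?_⟩
    · intro hmem
      have hk_in : inSub E j p₁ k := fun w => walk_support hac w0.bypass_isPath w hmem
      exact absurd (hMmax k hk_in) (not_le.mpr hMk)
    · intro hmem
      have hk_in : inSub E j p₂ k := fun w => walk_support hac w0.bypass_isPath w hmem
      exact absurd (hmmin k hk_in) (not_le.mpr hkm)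
  cases P0 with
  | nil => exact ReflTransGen.refl
  | cons h P =>
    have hmain := main_ind hT hp₁ hp₂ hne hadj1 hadj2 hM hm hMk hkm P.length P
      (SimpleGraph.Walk.nil : (dirGraph E).Walk k k) h (le_refl _)
      (by rwa [SimpleGraph.Walk.nil_append])
      (by rwa [SimpleGraph.Walk.nil_append])
      (by rwa [SimpleGraph.Walk.nil_append])
    rcases h.2 with hEkc | hEck
    · exact ReflTransGen.head hEkc (hmain.1 hEkc)
    · exact (hmain.2 hEck).elim
end

section
/- The set of simple congruences of the weak order on S_n is closed under meet in the congruence lattice: if ≡ and ≡' are simple congruences then ≡ ∧ ≡' is a simple congruence. Consequently, the simple congruences form a lattice under refinement. -/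
/-- An arc `(a, b, A, B)` on `[n]`: endpoints `a < b` and a partition
`A ⊔ B` of the open interval `]a, b[`. -/
structure Arc (n : ℕ) where
  a : Fin n
  b : Fin n
  A : Finset (Fin n)
  B : Finset (Fin n)
  hab : a < b
  hdisj : Disjoint A B
  hunion : A ∪ B = Finset.Ioo a b

/-- `Subarc α β` : `α` is a subarc of `β`. -/
def Subarc {n : ℕ} (α β : Arc n) : Prop :=
  β.a ≤ α.a ∧ α.b ≤ β.b ∧ α.A ⊆ β.A ∧ α.B ⊆ β.B

/-- An arc ideal: a lower set for the subarc order. -/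
def IsArcIdeal {n : ℕ} (I : Set (Arc n)) : Prop :=
  ∀ α β : Arc n, Subarc α β → β ∈ I → α ∈ I

/-- An ideal is essential when it contains all basic arcs `(i, i+1, ∅, ∅)`. -/
def EssentialIdeal {n : ℕ} (I : Set (Arc n)) : Prop :=
  ∀ α : Arc n, (α.b : ℕ) = (α.a : ℕ) + 1 → α ∈ I

/-- `α` is a subarc-minimal arc of the complement of `I`. -/
def MinNonArc {n : ℕ} (I : Set (Arc n)) (α : Arc n) : Prop :=
  α ∉ I ∧ ∀ β : Arc n, Subarc β α → β ∉ I → β = α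

/-- An ideal is simple when all subarc-minimal arcs of its complement are
up arcs (`B = ∅`) or down arcs (`A = ∅`). -/
def SimpleIdeal {n : ℕ} (I : Set (Arc n)) : Prop :=
  ∀ α : Arc n, MinNonArc I α → α.B = ∅ ∨ α.A = ∅

/-- the meet of two simple congruences of the weak order is simple
(congruences correspond to arc ideals, and meet corresponds to intersection of
arc ideals); consequently the simple congruences form a lattice under refinement. -/
theorem stmt4 {n : ℕ} (I I' : Set (Arc n))
    (hI : IsArcIdeal I) (hI' : IsArcIdeal I')
    (hs : SimpleIdeal I) (hs' : SimpleIdeal I') :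
    SimpleIdeal (I ∩ I') := by
  intro α ⟨hα, hmin⟩
  rcases (by tauto : α ∉ I ∨ α ∉ I') with h | h
  · exact hs α ⟨h, fun β hsub hβ => hmin β hsub (fun hm => hβ hm.1)⟩
  · exact hs' α ⟨h, fun β hsub hβ => hmin β hsub (fun hm => hβ hm.2)⟩
end

section
/- The number of simple essential congruences of the weak order on S_n equals C_{n-1}^2, the square of the (n-1)-st Catalan number. -/
/-- Monotone subdiagonal sequences of length `m`. -/
def Dseq (m : ℕ) : Type := {t : Fin m → ℕ // Monotone t ∧ ∀ i : Fin m, t i ≤ (i : ℕ)}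

instance Dseq.finite (m : ℕ) : Finite (Dseq m) := by
  apply Finite.of_injective (fun (t : Dseq m) => fun i : Fin m =>
    (⟨t.1 i, lt_of_le_of_lt (t.2.2 i) i.isLt⟩ : Fin m))
  intro s t h
  exact Subtype.ext (funext fun i => congrArg Fin.val (congrFun h i))

def dBuildFun (m : ℕ) (j : Fin (m + 1)) (p : Dseq j) (s : Dseq (m - j)) (i : Fin (m + 1)) : ℕ :=
  if h : (i : ℕ) < (j : ℕ) then p.1 ⟨i, h⟩ else
    if h2 : (i : ℕ) = (j : ℕ) then (j : ℕ) else (s.1 ⟨(i : ℕ) - (j : ℕ) - 1, by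
      have := i.isLt; have := j.isLt; omega⟩ + (j : ℕ))

lemma dBuildFun_lt {m : ℕ} {j : Fin (m + 1)} {p : Dseq j} {s : Dseq (m - j)} {i : Fin (m + 1)}
    (h : (i : ℕ) < (j : ℕ)) : dBuildFun m j p s i = p.1 ⟨i, h⟩ := dif_pos h

lemma dBuildFun_eq {m : ℕ} {j : Fin (m + 1)} {p : Dseq j} {s : Dseq (m - j)} {i : Fin (m + 1)}
    (h : (i : ℕ) = (j : ℕ)) : dBuildFun m j p s i = (j : ℕ) := by
  rw [dBuildFun, dif_neg (by omega), dif_pos h]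

lemma dBuildFun_gt {m : ℕ} {j : Fin (m + 1)} {p : Dseq j} {s : Dseq (m - j)} {i : Fin (m + 1)}
    (h : (j : ℕ) < (i : ℕ)) :
    dBuildFun m j p s i = s.1 ⟨(i : ℕ) - (j : ℕ) - 1, by have := i.isLt; omega⟩ + (j : ℕ) := by
  rw [dBuildFun, dif_neg (by omega), dif_neg (by omega)]

lemma dBuildFun_mono (m : ℕ) (j : Fin (m + 1)) (p : Dseq j) (s : Dseq (m - j)) :
    Monotone (dBuildFun m j p s) := by
  intro i i' hii'
  have hii : (i : ℕ) ≤ (i' : ℕ) := hii'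
  rcases lt_trichotomy (i : ℕ) (j : ℕ) with h1 | h1 | h1
  · rw [dBuildFun_lt h1]
    have hpi : p.1 ⟨i, h1⟩ ≤ (i : ℕ) := p.2.2 _
    rcases lt_trichotomy (i' : ℕ) (j : ℕ) with h1' | h1' | h1'
    · rw [dBuildFun_lt h1']; exact p.2.1 (by exact hii)
    · rw [dBuildFun_eq h1']; omega
    · rw [dBuildFun_gt h1']; omega
  · rw [dBuildFun_eq h1]
    rcases lt_trichotomy (i' : ℕ) (j : ℕ) with h1' | h1' | h1'
    · omega
    · rw [dBuildFun_eq h1']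
    · rw [dBuildFun_gt h1']; omega
  · rw [dBuildFun_gt h1, dBuildFun_gt (by omega : (j : ℕ) < (i' : ℕ))]
    have := s.2.1 (show (⟨(i : ℕ) - (j : ℕ) - 1, by have := i.isLt; omega⟩ : Fin (m - j)) ≤
      ⟨(i' : ℕ) - (j : ℕ) - 1, by have := i'.isLt; omega⟩ from by
        simp only [Fin.mk_le_mk]; omega)
    omega

lemma dBuildFun_le (m : ℕ) (j : Fin (m + 1)) (p : Dseq j) (s : Dseq (m - j)) (i : Fin (m + 1)) :
    dBuildFun m j p s i ≤ (i : ℕ) := by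
  rcases lt_trichotomy (i : ℕ) (j : ℕ) with h1 | h1 | h1
  · rw [dBuildFun_lt h1]; exact p.2.2 _
  · rw [dBuildFun_eq h1]; omega
  · rw [dBuildFun_gt h1]
    have := s.2.2 ⟨(i : ℕ) - (j : ℕ) - 1, by have := i.isLt; omega⟩
    simp only at this
    omega

/-- Strict inequality above `j`. -/
lemma dBuildFun_lt_self {m : ℕ} (j : Fin (m + 1)) (p : Dseq j) (s : Dseq (m - j))
    {i : Fin (m + 1)} (h : (j : ℕ) < (i : ℕ)) : dBuildFun m j p s i < (i : ℕ) := by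
  rw [dBuildFun_gt h]
  have := s.2.2 ⟨(i : ℕ) - (j : ℕ) - 1, by have := i.isLt; omega⟩
  simp only at this
  omega

def dBuild (m : ℕ) (x : Σ j : Fin (m + 1), Dseq j × Dseq (m - j)) : Dseq (m + 1) :=
  ⟨dBuildFun m x.1 x.2.1 x.2.2, dBuildFun_mono _ _ _ _, dBuildFun_le _ _ _ _⟩

lemma dBuild_injective (m : ℕ) : Function.Injective (dBuild m) := by
  rintro ⟨j, p, s⟩ ⟨j', p', s'⟩ h
  have hfun : dBuildFun m j p s = dBuildFun m j' p' s' := congrArg Subtype.val h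
  have hj : j = j' := by
    by_contra hne
    rcases lt_trichotomy (j : ℕ) (j' : ℕ) with hlt | heq | hgt
    · have h1 : dBuildFun m j p s j' < (j' : ℕ) := dBuildFun_lt_self j p s hlt
      rw [hfun, dBuildFun_eq rfl] at h1
      omega
    · exact hne (Fin.ext heq)
    · have h1 : dBuildFun m j' p' s' j < (j : ℕ) := dBuildFun_lt_self j' p' s' hgt
      rw [← hfun, dBuildFun_eq rfl] at h1
      omega
  subst hj
  have hp : p = p' := by
    apply Subtype.ext; funext i
    have hi : ((⟨(i : ℕ), by have := i.isLt; have := j.isLt; omega⟩ : Fin (m + 1)) : ℕ) < (j : ℕ) :=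
      i.isLt
    have := congrFun hfun ⟨(i : ℕ), by have := i.isLt; have := j.isLt; omega⟩
    rw [dBuildFun_lt hi, dBuildFun_lt hi] at this
    simpa using this
  have hs : s = s' := by
    apply Subtype.ext; funext b
    have hb : (b : ℕ) < m - (j : ℕ) := b.isLt
    have hgt : (j : ℕ) < ((⟨(j : ℕ) + 1 + (b : ℕ), by have := j.isLt; omega⟩ : Fin (m + 1)) : ℕ) := by
      simp only [Fin.val_mk]; omega
    have := congrFun hfun ⟨(j : ℕ) + 1 + (b : ℕ), by have := j.isLt; omega⟩
    rw [dBuildFun_gt hgt, dBuildFun_gt hgt] at this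
    simp only [Fin.val_mk] at this
    have h1 : s.1 ⟨(j : ℕ) + 1 + (b : ℕ) - (j : ℕ) - 1, by omega⟩ =
        s'.1 ⟨(j : ℕ) + 1 + (b : ℕ) - (j : ℕ) - 1, by omega⟩ := by omega
    have hbe : (⟨(j : ℕ) + 1 + (b : ℕ) - (j : ℕ) - 1, by omega⟩ : Fin (m - (j : ℕ))) = b :=
      Fin.ext (by simp only [Fin.val_mk]; omega)
    rwa [hbe] at h1
  rw [hp, hs]

lemma dBuild_surjective (m : ℕ) : Function.Surjective (dBuild m) := by
  intro t
  set S : Finset (Fin (m + 1)) := Finset.univ.filter (fun i => t.1 i = (i : ℕ)) with hS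
  have hne : S.Nonempty := by
    refine ⟨⟨0, by omega⟩, ?_⟩
    rw [hS, Finset.mem_filter]
    exact ⟨Finset.mem_univ _, Nat.le_antisymm (t.2.2 ⟨0, by omega⟩) (Nat.zero_le _)⟩
  set j : Fin (m + 1) := S.max' hne with hj
  have hjS : j ∈ S := S.max'_mem hne
  have htj : t.1 j = (j : ℕ) := by
    rw [hS, Finset.mem_filter] at hjS
    exact hjS.2
  have hlt : ∀ i : Fin (m + 1), (j : ℕ) < (i : ℕ) → t.1 i < (i : ℕ) := by
    intro i hi
    rcases Nat.lt_or_ge (t.1 i) (i : ℕ) with h | h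
    · exact h
    · exfalso
      have hiS : i ∈ S := by
        rw [hS, Finset.mem_filter]
        exact ⟨Finset.mem_univ _, Nat.le_antisymm (t.2.2 i) h⟩
      have := S.le_max' i hiS
      rw [← hj] at this
      have : (i : ℕ) ≤ (j : ℕ) := this
      omega
  have hjm : (j : ℕ) < m + 1 := j.isLt
  refine ⟨⟨j, ⟨fun i => t.1 ⟨(i : ℕ), by have := i.isLt; omega⟩, ?_, ?_⟩,
    ⟨fun b => t.1 ⟨(j : ℕ) + 1 + (b : ℕ), by have := b.isLt; omega⟩ - (j : ℕ), ?_, ?_⟩⟩, ?_⟩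
  · intro i i' hii
    exact t.2.1 (Fin.mk_le_mk.mpr (hii : (i : ℕ) ≤ (i' : ℕ)))
  · exact fun i => t.2.2 _
  · intro b b' hbb
    refine Nat.sub_le_sub_right (t.2.1 (Fin.mk_le_mk.mpr ?_)) _
    have : (b : ℕ) ≤ (b' : ℕ) := hbb
    omega
  · intro b
    have h2 := hlt ⟨(j : ℕ) + 1 + (b : ℕ), by have := b.isLt; omega⟩
      (by simp only [Fin.val_mk]; omega)
    simp only [Fin.val_mk] at h2
    show t.1 ⟨(j : ℕ) + 1 + (b : ℕ), by have := b.isLt; omega⟩ - (j : ℕ) ≤ (b : ℕ)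
    omega
  · apply Subtype.ext; funext i
    show dBuildFun m j _ _ i = t.1 i
    by_cases h1 : (i : ℕ) < (j : ℕ)
    · rw [dBuildFun_lt h1]
    · by_cases h2 : (i : ℕ) = (j : ℕ)
      · rw [dBuildFun_eq h2, ← htj]
        exact (congrArg t.1 (Fin.ext h2)).symm
      · have h3 : (j : ℕ) < (i : ℕ) := by omega
        rw [dBuildFun_gt h3]
        have hmono : (j : ℕ) ≤ t.1 i := by
          have h4 := t.2.1 (show j ≤ i from le_of_lt h3)
          omega
        show t.1 ⟨(j : ℕ) + 1 + (((⟨(i : ℕ) - (j : ℕ) - 1, by have := i.isLt; omega⟩ :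
            Fin (m - (j : ℕ))) : ℕ)), by have := i.isLt; omega⟩ - (j : ℕ) + (j : ℕ) = t.1 i
        have hidx : t.1 ⟨(j : ℕ) + 1 + (((⟨(i : ℕ) - (j : ℕ) - 1, by have := i.isLt; omega⟩ :
            Fin (m - (j : ℕ))) : ℕ)), by have := i.isLt; omega⟩ = t.1 i :=
          congrArg t.1 (Fin.ext (by simp only [Fin.val_mk]; omega))
        rw [hidx]
        omega
lemma card_Dseq : ∀ m : ℕ, Nat.card (Dseq m) = catalan m := by
  intro m
  induction m using Nat.strong_induction_on with
  | _ m ih =>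
    match m with
    | 0 =>
      haveI : Unique (Dseq 0) :=
        { default := ⟨fun i => i.elim0, fun i => i.elim0, fun i => i.elim0⟩
          uniq := fun t => Subtype.ext (funext fun i => i.elim0) }
      simp [Nat.card_unique, catalan]
    | m + 1 =>
      have e : Dseq (m + 1) ≃ Σ j : Fin (m + 1), Dseq j × Dseq (m - j) :=
        (Equiv.ofBijective (dBuild m) ⟨dBuild_injective m, dBuild_surjective m⟩).symm
      rw [Nat.card_congr e]
      haveI : ∀ j : Fin (m + 1), Fintype (Dseq (j : ℕ)) := fun j => Fintype.ofFinite _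
      haveI : ∀ j : Fin (m + 1), Fintype (Dseq (m - (j : ℕ))) := fun j => Fintype.ofFinite _
      rw [Nat.card_eq_fintype_card, Fintype.card_sigma]
      rw [catalan_succ]
      congr 1
      funext j
      rw [Fintype.card_prod, ← Nat.card_eq_fintype_card, ← Nat.card_eq_fintype_card,
        ih j (by have := j.isLt; omega), ih (m - j) (by omega)]

section PartB

variable {n : ℕ}

/-- A set of intervals is long when every member has length at least 2. -/
def LongSet (U : Set (Fin n × Fin n)) : Prop :=
  ∀ q ∈ U, (q.1 : ℕ) + 2 ≤ (q.2 : ℕ)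

/-- Closed upward under interval containment. -/
def UpClosedSet (U : Set (Fin n × Fin n)) : Prop :=
  ∀ q ∈ U, ∀ q' : Fin n × Fin n, q'.1 ≤ q.1 → q.2 ≤ q'.2 → q' ∈ U

/-- From a monotone subdiagonal sequence, build a long up-closed family. -/
def toLU (t : Dseq (n - 1)) : Set (Fin n × Fin n) :=
  {q | ∃ i : Fin (n - 1), (i : ℕ) = n - 2 - (q.1 : ℕ) ∧ n ≤ (q.2 : ℕ) + t.1 i}

lemma toLU_long (t : Dseq (n - 1)) : LongSet (toLU t) := by
  rintro ⟨a, b⟩ ⟨i, hi, hle⟩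
  have hi' : (i : ℕ) = n - 2 - (a : ℕ) := hi
  have hle' : n ≤ (b : ℕ) + t.1 i := hle
  have hti : t.1 i ≤ (i : ℕ) := t.2.2 i
  have hii : (i : ℕ) < n - 1 := i.isLt
  have hbn := b.isLt
  have han := a.isLt
  show (a : ℕ) + 2 ≤ (b : ℕ)
  omega

lemma toLU_upclosed (t : Dseq (n - 1)) : UpClosedSet (toLU t) := by
  rintro ⟨a, b⟩ ⟨i, hi, hle⟩ ⟨a', b'⟩ ha hb
  have hi' : (i : ℕ) = n - 2 - (a : ℕ) := hi
  have hle' : n ≤ (b : ℕ) + t.1 i := hle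
  have ha' : (a' : ℕ) ≤ (a : ℕ) := ha
  have hb' : (b : ℕ) ≤ (b' : ℕ) := hb
  have hii : (i : ℕ) < n - 1 := i.isLt
  have h2 : n - 2 - (a' : ℕ) < n - 1 := by omega
  have hmono := t.2.1 (show i ≤ ⟨n - 2 - (a' : ℕ), h2⟩ from
    Fin.le_def.mpr (by simp only [Fin.val_mk]; omega))
  exact ⟨⟨n - 2 - (a' : ℕ), h2⟩, by simp only [Fin.val_mk], by omega⟩

/-- Membership criterion for upward closed subsets of `Fin n`. -/
lemma upset_mem_iff (F : Finset (Fin n)) (hF : ∀ b ∈ F, ∀ b' : Fin n, b ≤ b' → b' ∈ F)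
    (b : Fin n) : b ∈ F ↔ n ≤ (b : ℕ) + F.card := by
  rcases F.eq_empty_or_nonempty with rfl | hne
  · simp only [Finset.notMem_empty, Finset.card_empty, add_zero, false_iff]
    have := b.isLt
    omega
  · have hmem : b ∈ F ↔ F.min' hne ≤ b := ⟨F.min'_le b, fun h => hF _ (F.min'_mem hne) b h⟩
    have hcard : F.card = n - ((F.min' hne : Fin n) : ℕ) := by
      have h1 := congrArg Finset.card (show F = Finset.Ici (F.min' hne) from by
        ext x
        exact ⟨fun hx => Finset.mem_Ici.mpr (F.min'_le x hx),
          fun hx => hF _ (F.min'_mem hne) x (Finset.mem_Ici.mp hx)⟩)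
      rw [Fin.card_Ici] at h1
      exact h1
    rw [hmem, Fin.le_def]
    have := (F.min' hne).isLt
    have := b.isLt
    omega

lemma toLU_injective : Function.Injective (toLU (n := n)) := by
  have aux : ∀ t t' : Dseq (n - 1), toLU t = toLU t' → ∀ i : Fin (n - 1), t'.1 i ≤ t.1 i := by
    intro t t' hU i
    rcases Nat.eq_zero_or_pos (t'.1 i) with h0 | h0
    · omega
    have hii : (i : ℕ) < n - 1 := i.isLt
    have hti : t'.1 i ≤ (i : ℕ) := t'.2.2 i
    have hmem : ((⟨n - 2 - (i : ℕ), by omega⟩ : Fin n), (⟨n - t'.1 i, by omega⟩ : Fin n))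
        ∈ toLU t' := by
      refine ⟨i, by simp only [Fin.val_mk]; omega, by simp only [Fin.val_mk]; omega⟩
    rw [← hU] at hmem
    obtain ⟨i₂, hi₂, hle₂⟩ := hmem
    simp only [Fin.val_mk] at hi₂ hle₂
    have : i₂ = i := Fin.ext (by omega)
    subst this
    omega
  intro t t' h
  exact Subtype.ext (funext fun i => Nat.le_antisymm (aux t' t h.symm i) (aux t t' h i))

lemma toLU_surjective (U : Set (Fin n × Fin n)) (hlong : LongSet U) (hup : UpClosedSet U) :
    ∃ t : Dseq (n - 1), toLU t = U := by
  classical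
  set F : Fin n → Finset (Fin n) := fun a => Finset.univ.filter (fun b => (a, b) ∈ U) with hF
  have hFmem : ∀ a b, b ∈ F a ↔ (a, b) ∈ U := by
    intro a b
    rw [hF, Finset.mem_filter]
    simp
  have hFup : ∀ a, ∀ b ∈ F a, ∀ b' : Fin n, b ≤ b' → b' ∈ F a := by
    intro a b hb b' hbb
    rw [hFmem] at hb ⊢
    exact hup (a, b) hb (a, b') le_rfl hbb
  have hFiff : ∀ a b, (a, b) ∈ U ↔ n ≤ (b : ℕ) + (F a).card := by
    intro a b
    rw [← hFmem, upset_mem_iff (F a) (hFup a)]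
  have hFanti : ∀ a a' : Fin n, a ≤ a' → (F a').card ≤ (F a).card := by
    intro a a' haa
    apply Finset.card_le_card
    intro b hb
    rw [hFmem] at hb ⊢
    exact hup (a', b) hb (a, b) haa le_rfl
  have hFbound : ∀ a : Fin n, (F a).card ≤ n - 2 - (a : ℕ) := by
    intro a
    rcases (F a).eq_empty_or_nonempty with he | hne
    · simp [he]
    · have hpos : 1 ≤ (F a).card := Finset.card_pos.mpr hne
      have hcn : (F a).card ≤ n := le_trans (Finset.card_le_univ _) (by simp)
      have hb0 : (⟨n - (F a).card, by omega⟩ : Fin n) ∈ F a :=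
        (upset_mem_iff (F a) (hFup a) _).mpr (by simp only [Fin.val_mk]; omega)
      have hlongb : (a : ℕ) + 2 ≤ ((⟨n - (F a).card, by omega⟩ : Fin n) : ℕ) :=
        hlong (a, _) ((hFmem a _).mp hb0)
      simp only [Fin.val_mk] at hlongb
      omega
  have hidx : ∀ i : Fin (n - 1), n - 2 - (i : ℕ) < n := fun i => by have := i.isLt; omega
  obtain ⟨t, htval⟩ : ∃ t : Dseq (n - 1),
      ∀ i : Fin (n - 1), t.1 i = (F ⟨n - 2 - (i : ℕ), hidx i⟩).card := by
    refine ⟨⟨fun i => (F ⟨n - 2 - (i : ℕ), hidx i⟩).card, ?_, ?_⟩, fun i => rfl⟩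
    · intro i i' hii
      have hii' : (i : ℕ) ≤ (i' : ℕ) := hii
      exact hFanti _ _ (Fin.le_def.mpr (by simp only [Fin.val_mk]; omega))
    · intro i
      show (F ⟨n - 2 - (i : ℕ), hidx i⟩).card ≤ (i : ℕ)
      have h1 := hFbound ⟨n - 2 - (i : ℕ), hidx i⟩
      simp only [Fin.val_mk] at h1
      have := i.isLt
      omega
  refine ⟨t, ?_⟩
  ext ⟨a, b⟩
  constructor
  · rintro ⟨i, hi, hle⟩
    have hi' : (i : ℕ) = n - 2 - (a : ℕ) := hi
    have hle' : n ≤ (b : ℕ) + t.1 i := hle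
    rw [htval i] at hle'
    have hii : (i : ℕ) < n - 1 := i.isLt
    show (a, b) ∈ U
    by_cases hai : (a : ℕ) ≤ n - 2
    · have hxa : (⟨n - 2 - (i : ℕ), hidx i⟩ : Fin n) = a := Fin.ext (by
        simp only [Fin.val_mk]; omega)
      rw [hxa] at hle'
      exact (hFiff a b).mpr hle'
    · exfalso
      have h1 := hFbound ⟨n - 2 - (i : ℕ), hidx i⟩
      simp only [Fin.val_mk] at h1
      have := b.isLt
      omega
  · intro hab
    have hlab : (a : ℕ) + 2 ≤ (b : ℕ) := hlong (a, b) hab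
    have hbn := b.isLt
    refine ⟨⟨n - 2 - (a : ℕ), by omega⟩, by simp only [Fin.val_mk], ?_⟩
    rw [htval ⟨n - 2 - (a : ℕ), by omega⟩]
    have hxa : (⟨n - 2 - ((⟨n - 2 - (a : ℕ), by omega⟩ : Fin (n - 1)) : ℕ),
        hidx ⟨n - 2 - (a : ℕ), by omega⟩⟩ : Fin n) = a := Fin.ext (by
      simp only [Fin.val_mk]; omega)
    rw [hxa]
    show n ≤ (b : ℕ) + (F a).card
    exact (hFiff a b).mp hab

lemma card_LU (n : ℕ) :
    Nat.card {U : Set (Fin n × Fin n) // LongSet U ∧ UpClosedSet U} = catalan (n - 1) := by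
  rw [← card_Dseq (n - 1)]
  apply Nat.card_congr
  exact (Equiv.ofBijective (fun t => ⟨toLU t, toLU_long t, toLU_upclosed t⟩)
    ⟨fun t t' h => toLU_injective (by simpa using congrArg Subtype.val h),
     fun U => by
      obtain ⟨t, ht⟩ := toLU_surjective U.1 U.2.1 U.2.2
      exact ⟨t, Subtype.ext ht⟩⟩).symm

end PartB

section PartA

variable {n : ℕ}

lemma Arc.ext' {α β : Arc n} (ha : α.a = β.a) (hb : α.b = β.b) (hA : α.A = β.A)
    (hB : α.B = β.B) : α = β := by
  cases α; cases β; simp_all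

lemma subarc_refl (α : Arc n) : Subarc α α :=
  ⟨le_refl _, le_refl _, subset_refl _, subset_refl _⟩

lemma subarc_trans {α β γ : Arc n} (h1 : Subarc α β) (h2 : Subarc β γ) : Subarc α γ :=
  ⟨le_trans h2.1 h1.1, le_trans h1.2.1 h2.2.1, subset_trans h1.2.2.1 h2.2.2.1,
    subset_trans h1.2.2.2 h2.2.2.2⟩

/-- Two arcs with the same endpoints, one a subarc of the other, are equal. -/
lemma arc_eq_of_subarc_same_ends {α β : Arc n} (h : Subarc α β) (ha : α.a = β.a)
    (hb : α.b = β.b) : α = β := by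
  have hU : α.A ∪ α.B = β.A ∪ β.B := by rw [α.hunion, β.hunion, ha, hb]
  have hA : β.A ⊆ α.A := by
    intro x hx
    have hx2 : x ∈ α.A ∪ α.B := by rw [hU]; exact Finset.mem_union_left _ hx
    rcases Finset.mem_union.mp hx2 with h' | h'
    · exact h'
    · exact absurd (Finset.mem_of_subset h.2.2.2 h') (Finset.disjoint_left.mp β.hdisj hx)
  have hB : β.B ⊆ α.B := by
    intro x hx
    have hx2 : x ∈ α.A ∪ α.B := by rw [hU]; exact Finset.mem_union_right _ hx
    rcases Finset.mem_union.mp hx2 with h' | h'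
    · exact absurd hx (Finset.disjoint_left.mp β.hdisj (Finset.mem_of_subset h.2.2.1 h'))
    · exact h'
  exact Arc.ext' ha hb (Finset.Subset.antisymm h.2.2.1 hA) (Finset.Subset.antisymm h.2.2.2 hB)

/-- Existence of a subarc-minimal non-member below any non-member. -/
lemma exists_min_nonarc (I : Set (Arc n)) :
    ∀ (m : ℕ) (α : Arc n), (α.b : ℕ) - (α.a : ℕ) ≤ m → α ∉ I →
      ∃ β : Arc n, Subarc β α ∧ MinNonArc I β := by
  intro m
  induction m with
  | zero =>
    intro α hm _
    have := α.hab
    rw [Fin.lt_def] at this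
    omega
  | succ m ih =>
    intro α hm hα
    by_cases h : ∀ β : Arc n, Subarc β α → β ∉ I → β = α
    · exact ⟨α, subarc_refl α, hα, h⟩
    · push_neg at h
      obtain ⟨β, hβsub, hβni, hβne⟩ := h
      have ha1 : (α.a : ℕ) ≤ (β.a : ℕ) := hβsub.1
      have hb1 : (β.b : ℕ) ≤ (α.b : ℕ) := hβsub.2.1
      have hab : (β.a : ℕ) < (β.b : ℕ) := Fin.lt_def.mp β.hab
      have hne : (β.b : ℕ) - (β.a : ℕ) ≠ (α.b : ℕ) - (α.a : ℕ) := by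
        intro hEq
        exact hβne (arc_eq_of_subarc_same_ends hβsub (Fin.ext (by omega)) (Fin.ext (by omega)))
      obtain ⟨γ, hγsub, hγmin⟩ := ih β (by omega) hβni
      exact ⟨γ, subarc_trans hγsub hβsub, hγmin⟩

/-- The up arc with endpoints `a < b`. -/
def upArc (a b : Fin n) (h : a < b) : Arc n :=
  ⟨a, b, Finset.Ioo a b, ∅, h, Finset.disjoint_empty_right _, Finset.union_empty _⟩

/-- The down arc with endpoints `a < b`. -/
def downArc (a b : Fin n) (h : a < b) : Arc n :=
  ⟨a, b, ∅, Finset.Ioo a b, h, Finset.disjoint_empty_left _, Finset.empty_union _⟩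

/-- `α` contains a forbidden up interval. -/
def hitsU (U : Set (Fin n × Fin n)) (α : Arc n) : Prop :=
  ∃ q ∈ U, α.a ≤ q.1 ∧ q.2 ≤ α.b ∧ Finset.Ioo q.1 q.2 ⊆ α.A

/-- `α` contains a forbidden down interval. -/
def hitsD (D : Set (Fin n × Fin n)) (α : Arc n) : Prop :=
  ∃ q ∈ D, α.a ≤ q.1 ∧ q.2 ≤ α.b ∧ Finset.Ioo q.1 q.2 ⊆ α.B

/-- The ideal determined by a pair of forbidden families. -/
def arcPhi (U D : Set (Fin n × Fin n)) : Set (Arc n) :=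
  {α | ¬ hitsU U α ∧ ¬ hitsD D α}

/-- The forbidden up intervals of an ideal. -/
def arcUSet (I : Set (Arc n)) : Set (Fin n × Fin n) :=
  {q | ∃ h : q.1 < q.2, (q.1 : ℕ) + 2 ≤ (q.2 : ℕ) ∧ upArc q.1 q.2 h ∉ I}

/-- The forbidden down intervals of an ideal. -/
def arcDSet (I : Set (Arc n)) : Set (Fin n × Fin n) :=
  {q | ∃ h : q.1 < q.2, (q.1 : ℕ) + 2 ≤ (q.2 : ℕ) ∧ downArc q.1 q.2 h ∉ I}

lemma arcPhi_ideal (U D : Set (Fin n × Fin n)) : IsArcIdeal (arcPhi U D) := by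
  intro α β hsub hβ
  constructor
  · rintro ⟨q, hq, h1, h2, h3⟩
    exact hβ.1 ⟨q, hq, le_trans hsub.1 h1, le_trans h2 hsub.2.1, subset_trans h3 hsub.2.2.1⟩
  · rintro ⟨q, hq, h1, h2, h3⟩
    exact hβ.2 ⟨q, hq, le_trans hsub.1 h1, le_trans h2 hsub.2.1, subset_trans h3 hsub.2.2.2⟩

lemma arcPhi_essential {U D : Set (Fin n × Fin n)} (hU : LongSet U) (hD : LongSet D) :
    EssentialIdeal (arcPhi U D) := by
  intro α hbasic
  constructor
  · rintro ⟨q, hq, h1, h2, _⟩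
    have := hU q hq
    have h1' : (α.a : ℕ) ≤ (q.1 : ℕ) := h1
    have h2' : (q.2 : ℕ) ≤ (α.b : ℕ) := h2
    omega
  · rintro ⟨q, hq, h1, h2, _⟩
    have := hD q hq
    have h1' : (α.a : ℕ) ≤ (q.1 : ℕ) := h1
    have h2' : (q.2 : ℕ) ≤ (α.b : ℕ) := h2
    omega

lemma arcPhi_simple {U D : Set (Fin n × Fin n)} (hU : LongSet U) (hD : LongSet D) :
    SimpleIdeal (arcPhi U D) := by
  intro α hmin
  have hα : ¬ (¬ hitsU U α ∧ ¬ hitsD D α) := hmin.1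
  rcases Classical.em (hitsU U α) with hhit | hhit
  · obtain ⟨q, hq, h1, h2, h3⟩ := hhit
    have hlt : q.1 < q.2 := Fin.lt_def.mpr (by have := hU q hq; omega)
    have hβni : upArc q.1 q.2 hlt ∉ arcPhi U D := by
      rintro ⟨hU', _⟩
      exact hU' ⟨q, hq, le_refl _, le_refl _, subset_refl _⟩
    have hβsub : Subarc (upArc q.1 q.2 hlt) α :=
      ⟨h1, h2, h3, Finset.empty_subset _⟩
    have := hmin.2 _ hβsub hβni
    left
    rw [← this]
    rfl
  · rcases Classical.em (hitsD D α) with hhit2 | hhit2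
    · obtain ⟨q, hq, h1, h2, h3⟩ := hhit2
      have hlt : q.1 < q.2 := Fin.lt_def.mpr (by have := hD q hq; omega)
      have hβni : downArc q.1 q.2 hlt ∉ arcPhi U D := by
        rintro ⟨_, hD'⟩
        exact hD' ⟨q, hq, le_refl _, le_refl _, subset_refl _⟩
      have hβsub : Subarc (downArc q.1 q.2 hlt) α :=
        ⟨h1, h2, Finset.empty_subset _, h3⟩
      have := hmin.2 _ hβsub hβni
      right
      rw [← this]
      rfl
    · exact absurd ⟨hhit, hhit2⟩ hα

lemma arcUSet_long (I : Set (Arc n)) : LongSet (arcUSet I) := fun q hq => hq.2.1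

lemma arcDSet_long (I : Set (Arc n)) : LongSet (arcDSet I) := fun q hq => hq.2.1

lemma arcUSet_upclosed {I : Set (Arc n)} (hI : IsArcIdeal I) : UpClosedSet (arcUSet I) := by
  rintro q ⟨hlt, hlong, hni⟩ q' h1 h2
  have h1' : (q'.1 : ℕ) ≤ (q.1 : ℕ) := h1
  have h2' : (q.2 : ℕ) ≤ (q'.2 : ℕ) := h2
  have hlt' : q'.1 < q'.2 := Fin.lt_def.mpr (by have := Fin.lt_def.mp hlt; omega)
  refine ⟨hlt', by omega, fun hmem => hni ?_⟩
  exact hI (upArc q.1 q.2 hlt) (upArc q'.1 q'.2 hlt')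
    ⟨h1, h2, Finset.Ioo_subset_Ioo h1 h2, Finset.empty_subset _⟩ hmem

lemma arcDSet_upclosed {I : Set (Arc n)} (hI : IsArcIdeal I) : UpClosedSet (arcDSet I) := by
  rintro q ⟨hlt, hlong, hni⟩ q' h1 h2
  have h1' : (q'.1 : ℕ) ≤ (q.1 : ℕ) := h1
  have h2' : (q.2 : ℕ) ≤ (q'.2 : ℕ) := h2
  have hlt' : q'.1 < q'.2 := Fin.lt_def.mpr (by have := Fin.lt_def.mp hlt; omega)
  refine ⟨hlt', by omega, fun hmem => hni ?_⟩
  exact hI (downArc q.1 q.2 hlt) (downArc q'.1 q'.2 hlt')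
    ⟨h1, h2, Finset.empty_subset _, Finset.Ioo_subset_Ioo h1 h2⟩ hmem

lemma arcPhi_arcUSet {I : Set (Arc n)} (hId : IsArcIdeal I) (hEss : EssentialIdeal I)
    (hSim : SimpleIdeal I) : arcPhi (arcUSet I) (arcDSet I) = I := by
  ext α
  constructor
  · intro hPhi
    by_contra hα
    obtain ⟨β, hβsub, hβmin⟩ := exists_min_nonarc I ((α.b : ℕ) - (α.a : ℕ)) α le_rfl hα
    have hβni : β ∉ I := hβmin.1
    have hab : (β.a : ℕ) < (β.b : ℕ) := Fin.lt_def.mp β.hab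
    have hlong : (β.a : ℕ) + 2 ≤ (β.b : ℕ) := by
      rcases Nat.lt_or_ge ((β.a : ℕ) + 1) (β.b : ℕ) with h | h
      · omega
      · exact absurd (hEss β (by omega)) hβni
    rcases hSim β hβmin with hB | hA
    · -- β is an up arc
      have hAIoo : β.A = Finset.Ioo β.a β.b := by
        have := β.hunion
        rw [hB, Finset.union_empty] at this
        exact this
      have hβeq : upArc β.a β.b β.hab = β :=
        Arc.ext' rfl rfl hAIoo.symm hB.symm
      have hmem : (β.a, β.b) ∈ arcUSet I := ⟨β.hab, hlong, by rw [hβeq]; exact hβni⟩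
      exact hPhi.1 ⟨(β.a, β.b), hmem, hβsub.1, hβsub.2.1, by rw [← hAIoo]; exact hβsub.2.2.1⟩
    · -- β is a down arc
      have hBIoo : β.B = Finset.Ioo β.a β.b := by
        have := β.hunion
        rw [hA, Finset.empty_union] at this
        exact this
      have hβeq : downArc β.a β.b β.hab = β :=
        Arc.ext' rfl rfl hA.symm hBIoo.symm
      have hmem : (β.a, β.b) ∈ arcDSet I := ⟨β.hab, hlong, by rw [hβeq]; exact hβni⟩
      exact hPhi.2 ⟨(β.a, β.b), hmem, hβsub.1, hβsub.2.1, by rw [← hBIoo]; exact hβsub.2.2.2⟩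
  · intro hα
    constructor
    · rintro ⟨q, ⟨hlt, hlong, hni⟩, h1, h2, h3⟩
      exact hni (hId _ _ ⟨h1, h2, h3, Finset.empty_subset _⟩ hα)
    · rintro ⟨q, ⟨hlt, hlong, hni⟩, h1, h2, h3⟩
      exact hni (hId _ _ ⟨h1, h2, Finset.empty_subset _, h3⟩ hα)

lemma nonempty_Ioo_of_long {a b : Fin n} (h : (a : ℕ) + 2 ≤ (b : ℕ)) :
    (Finset.Ioo a b).Nonempty := by
  have hbn := b.isLt
  refine ⟨⟨(a : ℕ) + 1, by omega⟩, ?_⟩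
  rw [Finset.mem_Ioo]
  constructor
  · rw [Fin.lt_def]; simp only [Fin.val_mk]; omega
  · rw [Fin.lt_def]; simp only [Fin.val_mk]; omega

lemma arcUSet_arcPhi {U D : Set (Fin n × Fin n)} (hUl : LongSet U) (hUu : UpClosedSet U)
    (hDl : LongSet D) : arcUSet (arcPhi U D) = U := by
  ext q
  constructor
  · rintro ⟨hlt, hlong, hni⟩
    rcases Classical.em (hitsU U (upArc q.1 q.2 hlt)) with hhit | hhit
    · obtain ⟨q', hq', h1, h2, _⟩ := hhit
      exact hUu q' hq' q h1 h2
    · exfalso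
      rcases Classical.em (hitsD D (upArc q.1 q.2 hlt)) with hhit2 | hhit2
      · obtain ⟨q', hq', _, _, h3⟩ := hhit2
        obtain ⟨x, hx⟩ := nonempty_Ioo_of_long (hDl q' hq')
        exact absurd (h3 hx) (Finset.notMem_empty x)
      · exact hni ⟨hhit, hhit2⟩
  · intro hq
    have hlong := hUl q hq
    have hlt : q.1 < q.2 := Fin.lt_def.mpr (by omega)
    refine ⟨hlt, hlong, fun hPhi => hPhi.1 ⟨q, hq, le_refl _, le_refl _, subset_refl _⟩⟩

lemma arcDSet_arcPhi {U D : Set (Fin n × Fin n)} (hUl : LongSet U) (hDl : LongSet D)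
    (hDu : UpClosedSet D) : arcDSet (arcPhi U D) = D := by
  ext q
  constructor
  · rintro ⟨hlt, hlong, hni⟩
    rcases Classical.em (hitsD D (downArc q.1 q.2 hlt)) with hhit | hhit
    · obtain ⟨q', hq', h1, h2, _⟩ := hhit
      exact hDu q' hq' q h1 h2
    · exfalso
      rcases Classical.em (hitsU U (downArc q.1 q.2 hlt)) with hhit2 | hhit2
      · obtain ⟨q', hq', _, _, h3⟩ := hhit2
        obtain ⟨x, hx⟩ := nonempty_Ioo_of_long (hUl q' hq')
        exact absurd (h3 hx) (Finset.notMem_empty x)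
      · exact hni ⟨hhit2, hhit⟩
  · intro hq
    have hlong := hDl q hq
    have hlt : q.1 < q.2 := Fin.lt_def.mpr (by omega)
    refine ⟨hlt, hlong, fun hPhi => hPhi.2 ⟨q, hq, le_refl _, le_refl _, subset_refl _⟩⟩

/-- The main bijection. -/
def goodEquiv (n : ℕ) :
    {I : Set (Arc n) // IsArcIdeal I ∧ EssentialIdeal I ∧ SimpleIdeal I} ≃
      ({U : Set (Fin n × Fin n) // LongSet U ∧ UpClosedSet U} ×
       {U : Set (Fin n × Fin n) // LongSet U ∧ UpClosedSet U}) where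
  toFun I := (⟨arcUSet I.1, arcUSet_long I.1, arcUSet_upclosed I.2.1⟩,
              ⟨arcDSet I.1, arcDSet_long I.1, arcDSet_upclosed I.2.1⟩)
  invFun P := ⟨arcPhi P.1.1 P.2.1,
    arcPhi_ideal _ _, arcPhi_essential P.1.2.1 P.2.2.1, arcPhi_simple P.1.2.1 P.2.2.1⟩
  left_inv I := Subtype.ext (arcPhi_arcUSet I.2.1 I.2.2.1 I.2.2.2)
  right_inv P := Prod.ext
    (Subtype.ext (arcUSet_arcPhi P.1.2.1 P.1.2.2 P.2.2.1))
    (Subtype.ext (arcDSet_arcPhi P.1.2.1 P.2.2.1 P.2.2.2))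

end PartA


/-- the number of simple essential congruences of the weak order on
`S_n` (equivalently, of simple essential arc ideals on `[n]`) is the square of the
`(n-1)`-st Catalan number. -/
theorem stmt5 {n : ℕ} (hn : 1 ≤ n) :
    Nat.card {I : Set (Arc n) // IsArcIdeal I ∧ EssentialIdeal I ∧ SimpleIdeal I} =
      catalan (n - 1) ^ 2 := by
  rw [Nat.card_congr (goodEquiv n), Nat.card_prod, card_LU, sq]
end

section
/- If two ≡-admissible separating trees T and T' (for the same essential lattice congruence ≡ of the weak order on S_n) have a common linear extension, then T = T'. -/
open Relation Finset

/-- A mandatory arc of a separating tree `E`: one arc per edge of the tree between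
`α.a < α.b`, where `A` (resp. `B`) records the intermediate values admitting a
directed path to the edge (resp. from the edge). -/
def MandatoryArc {n : ℕ} (E : Fin n → Fin n → Prop) (α : Arc n) : Prop :=
  (E α.a α.b ∨ E α.b α.a) ∧
  ∀ j : Fin n, α.a < j → j < α.b →
    ((j ∈ α.A ↔ (Relation.ReflTransGen E j α.a ∨ Relation.ReflTransGen E j α.b)) ∧
     (j ∈ α.B ↔ (Relation.ReflTransGen E α.a j ∨ Relation.ReflTransGen E α.b j)))

/-- A forbidden up arc of a separating tree `E`: the up arc `u(M, m)` where
`M = max L`, `m = min R` for two ancestor subtrees `L < R` of a node `j`. -/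
def ForbiddenUpArc {n : ℕ} (E : Fin n → Fin n → Prop) (α : Arc n) : Prop :=
  α.B = ∅ ∧ ∃ j p₁ p₂ : Fin n, E j p₁ ∧ E j p₂ ∧ p₁ ≠ p₂ ∧
    inSub E j p₁ α.a ∧ (∀ x, inSub E j p₁ x → x ≤ α.a) ∧
    inSub E j p₂ α.b ∧ (∀ x, inSub E j p₂ x → α.b ≤ x)

/-- A forbidden down arc of a separating tree `E`: the down arc `d(M, m)` where
`M = max L`, `m = min R` for two descendant subtrees `L < R` of a node `j`. -/
def ForbiddenDownArc {n : ℕ} (E : Fin n → Fin n → Prop) (α : Arc n) : Prop :=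
  α.A = ∅ ∧ ∃ j c₁ c₂ : Fin n, E c₁ j ∧ E c₂ j ∧ c₁ ≠ c₂ ∧
    inSub E j c₁ α.a ∧ (∀ x, inSub E j c₁ x → x ≤ α.a) ∧
    inSub E j c₂ α.b ∧ (∀ x, inSub E j c₂ x → α.b ≤ x)

/-- A separating tree is `I`-admissible when the arc ideal `I` contains all its
mandatory arcs and none of its forbidden arcs. -/
def AdmissibleTree {n : ℕ} (I : Set (Arc n)) (E : Fin n → Fin n → Prop) : Prop :=
  IsSepTree E ∧
  (∀ α : Arc n, MandatoryArc E α → α ∈ I) ∧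
  (∀ α : Arc n, ForbiddenUpArc E α ∨ ForbiddenDownArc E α → α ∉ I)

/-- `σ` is a linear extension of the directed tree `E`: `σ p` is the value at
position `p`, and each directed edge goes from an earlier to a later value. -/
def IsLinExt {n : ℕ} (E : Fin n → Fin n → Prop) (σ : Equiv.Perm (Fin n)) : Prop :=
  ∀ a b : Fin n, E a b → σ.symm a < σ.symm b

namespace StmtSix

open SimpleGraph

variable {α : Type*} [DecidableEq α] {E : α → α → Prop}

/-- There is a walk from `x` to `z` avoiding `p`. -/
def Avoid (E : α → α → Prop) (p x z : α) : Prop :=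
  ∃ W : (dirGraph E).Walk x z, p ∉ W.support

lemma inSub_iff_not_avoid {z p x : α} : inSub E z p x ↔ ¬ Avoid E p x z := by
  unfold inSub Avoid
  push_neg
  simp [not_not]

lemma Avoid.trans {p x y z : α} (h1 : Avoid E p x y) (h2 : Avoid E p y z) :
    Avoid E p x z := by
  obtain ⟨W1, h1⟩ := h1; obtain ⟨W2, h2⟩ := h2
  refine ⟨W1.append W2, ?_⟩
  rw [SimpleGraph.Walk.mem_support_append_iff]
  tauto

lemma Avoid.symm {p x z : α} (h : Avoid E p x z) : Avoid E p z x := by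
  obtain ⟨W, h⟩ := h
  exact ⟨W.reverse, by simpa [SimpleGraph.Walk.support_reverse] using h⟩

lemma avoid_refl {p x : α} (h : p ≠ x) : Avoid E p x x :=
  ⟨SimpleGraph.Walk.nil, by simpa using h⟩

lemma avoid_adj {p x z : α} (h : (dirGraph E).Adj x z) (h1 : p ≠ x) (h2 : p ≠ z) :
    Avoid E p x z :=
  ⟨SimpleGraph.Walk.cons h SimpleGraph.Walk.nil, by
    simp only [SimpleGraph.Walk.support_cons, SimpleGraph.Walk.support_nil, List.mem_cons,
      List.mem_singleton, List.not_mem_nil, or_false]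
    push_neg
    exact ⟨h1, h2⟩⟩

lemma not_avoid_start {p z : α} : ¬ Avoid E p p z := by
  rintro ⟨W, h⟩; exact h W.start_mem_support

lemma not_avoid_end {p x : α} : ¬ Avoid E p x p := by
  rintro ⟨W, h⟩; exact h W.end_mem_support

/-- A walk obtained from a directed reflexive-transitive chain,
whose support consists of intermediate points of the chain. -/
lemma chain_walk {x y : α} (h : Relation.ReflTransGen E x y) :
    ∃ W : (dirGraph E).Walk x y, ∀ v ∈ W.support,
      Relation.ReflTransGen E x v ∧ Relation.ReflTransGen E v y := by
  induction h with
  | refl =>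
      refine ⟨SimpleGraph.Walk.nil, ?_⟩
      intro v hv
      simp only [SimpleGraph.Walk.support_nil, List.mem_singleton] at hv
      subst hv
      exact ⟨Relation.ReflTransGen.refl, Relation.ReflTransGen.refl⟩
  | tail hab hbc ih =>
      rename_i b c
      obtain ⟨W, hW⟩ := ih
      by_cases hbceq : b = c
      · subst hbceq; exact ⟨W, fun v hv => ⟨(hW v hv).1, (hW v hv).2⟩⟩
      · refine ⟨W.concat (by rw [dirGraph]; exact ⟨hbceq, Or.inl hbc⟩ : (dirGraph E).Adj b c), ?_⟩
        intro v hv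
        rw [SimpleGraph.Walk.support_concat] at hv
        rw [List.mem_append, List.mem_singleton] at hv
        rcases hv with hv | hv
        · exact ⟨(hW v hv).1, ((hW v hv).2).tail hbc⟩
        · subst hv
          exact ⟨(hW b W.end_mem_support).1.tail hbc, Relation.ReflTransGen.refl⟩

/-- From a chain avoiding a vertex (as certified by a predicate on chain points),
get an `Avoid`. -/
lemma avoid_of_chain {p x y : α} (h : Relation.ReflTransGen E x y)
    (hp : ∀ v, Relation.ReflTransGen E x v → Relation.ReflTransGen E v y → p ≠ v) :
    Avoid E p x y := by
  obtain ⟨W, hW⟩ := chain_walk h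
  exact ⟨W, fun hmem => hp p (hW p hmem).1 (hW p hmem).2 rfl⟩

lemma reach_reachable {x y : α} (h : Relation.ReflTransGen E x y) :
    (dirGraph E).Reachable x y := by
  obtain ⟨W, -⟩ := chain_walk h; exact ⟨W⟩


lemma not_avoid_iff {p x z : α} :
    ¬ Avoid E p x z ↔ ∀ W : (dirGraph E).Walk x z, p ∈ W.support := by
  unfold Avoid; push_neg; simp [not_not]

section Tree
variable (htree : (dirGraph E).IsTree)
include htree

lemma path_support_subset {x z : α} (P W : (dirGraph E).Walk x z) (hP : P.IsPath) :
    P.support ⊆ W.support := by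
  obtain ⟨Q, -, huniq⟩ := htree.existsUnique_path x z
  have h1 : P = Q := huniq P hP
  have h2 : (W.toPath : (dirGraph E).Walk x z) = Q := huniq _ W.toPath.2
  rw [h1, ← h2]
  exact W.support_toPath_subset

/-- Tree alternative: `x` cannot avoid both endpoints of an edge towards each other. -/
lemma tree_alt {p z x : α} (hadj : (dirGraph E).Adj p z) :
    ¬ (Avoid E p x z ∧ Avoid E z x p) := by
  rintro ⟨⟨W1, hW1⟩, ⟨W2, hW2⟩⟩
  set P2 := W2.toPath with hP2def
  have hP2sup : (P2 : (dirGraph E).Walk x p).support ⊆ W2.support := W2.support_toPath_subset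
  have hzP2 : z ∉ (P2 : (dirGraph E).Walk x p).support := fun h => hW2 (hP2sup h)
  have hQpath : ((SimpleGraph.Walk.cons hadj.symm
      (P2 : (dirGraph E).Walk x p).reverse).reverse).IsPath := by
    rw [SimpleGraph.Walk.isPath_reverse_iff, SimpleGraph.Walk.cons_isPath_iff]
    refine ⟨by rw [SimpleGraph.Walk.isPath_reverse_iff]; exact P2.2, ?_⟩
    rw [SimpleGraph.Walk.support_reverse, List.mem_reverse]
    exact hzP2
  have hsub := path_support_subset htree _ W1 hQpath
  have hpin : p ∈ ((SimpleGraph.Walk.cons hadj.symm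
      (P2 : (dirGraph E).Walk x p).reverse).reverse).support := by
    rw [SimpleGraph.Walk.support_reverse, List.mem_reverse, SimpleGraph.Walk.support_cons]
    right
    rw [SimpleGraph.Walk.support_reverse]
    exact List.mem_reverse.mpr (SimpleGraph.Walk.end_mem_support _)
  exact hW1 (hsub hpin)

omit htree in
lemma endp_not_mem_takeUntil {x z u : α} (P : (dirGraph E).Walk x z) (hP : P.IsPath)
    (h : u ∈ P.support) (hu : u ≠ z) : z ∉ (P.takeUntil u h).support := by
  intro hz
  have hspec := P.take_spec h
  have hnodup : P.support.Nodup := hP.support_nodup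
  rw [← hspec, SimpleGraph.Walk.support_append] at hnodup
  have hdisj := List.disjoint_of_nodup_append hnodup
  have hz2 : z ∈ (P.dropUntil u h).support.tail := by
    have hend : z ∈ (P.dropUntil u h).support := SimpleGraph.Walk.end_mem_support _
    rw [SimpleGraph.Walk.mem_support_iff] at hend
    rcases hend with h1 | h1
    · exact absurd h1 hu.symm
    · exact h1
  exact hdisj hz hz2

/-- The penultimate vertex towards `z`. -/
lemma penult {x z : α} (hxz : x ≠ z) (hreach : (dirGraph E).Reachable x z) :
    ∃ q, (dirGraph E).Adj q z ∧ ¬ Avoid E q x z ∧ Avoid E z x q := by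
  obtain ⟨Q, hQ, huniq⟩ := htree.existsUnique_path x z
  clear hQ
  have hQpath : Q.IsPath := by
    have := huniq (Q.toPath : (dirGraph E).Walk x z) (Q.toPath).2
    rw [← this]; exact (Q.toPath).2
  obtain ⟨q, hadj, tail, hrev⟩ := Q.reverse.exists_eq_cons_of_ne (Ne.symm hxz)
  · have hQeq : Q = tail.reverse.concat hadj.symm := by
      have := congrArg SimpleGraph.Walk.reverse hrev
      rw [SimpleGraph.Walk.reverse_reverse] at this
      rw [this, SimpleGraph.Walk.reverse_cons]
      rfl
    refine ⟨q, hadj.symm, ?_, ?_⟩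
    · rw [not_avoid_iff]
      intro W
      apply path_support_subset htree Q W hQpath
      rw [hQeq, SimpleGraph.Walk.support_concat]
      rw [List.mem_append]
      left; exact SimpleGraph.Walk.end_mem_support _
    · refine ⟨tail.reverse, ?_⟩
      have hnd : Q.support.Nodup := hQpath.support_nodup
      rw [hQeq, SimpleGraph.Walk.support_concat] at hnd
      have := List.disjoint_of_nodup_append hnd
      intro hz
      exact this hz (List.mem_singleton.mpr rfl)

/-- Two distinct neighbours of `z` cannot both be unavoidable from `x` to `z`. -/
lemma two_neighbours {x z q₁ q₂ : α} (h1 : (dirGraph E).Adj q₁ z) (h2 : (dirGraph E).Adj q₂ z)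
    (hne : q₁ ≠ q₂) (hq1 : ¬ Avoid E q₁ x z) (hq2 : ¬ Avoid E q₂ x z) : False := by
  obtain ⟨Q, -, huniq⟩ := htree.existsUnique_path x z
  have hQpath : Q.IsPath := by
    have := huniq (Q.toPath : (dirGraph E).Walk x z) (Q.toPath).2
    rw [← this]; exact (Q.toPath).2
  have hm1 : q₁ ∈ Q.support := not_avoid_iff.mp hq1 Q
  have hm2 : q₂ ∈ Q.support := not_avoid_iff.mp hq2 Q
  by_cases hc : q₂ ∈ (Q.takeUntil q₁ hm1).support
  · -- walk x → q₂ → z avoiding q₁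
    have hP1 : (Q.takeUntil q₁ hm1).IsPath := hQpath.takeUntil hm1
    have hq1notin : q₁ ∉ ((Q.takeUntil q₁ hm1).takeUntil q₂ hc).support :=
      endp_not_mem_takeUntil _ hP1 hc hne.symm
    have hznotin : z ∉ ((Q.takeUntil q₁ hm1).takeUntil q₂ hc).support := by
      intro hz
      exact endp_not_mem_takeUntil Q hQpath hm1 h1.ne ((SimpleGraph.Walk.support_takeUntil_subset _ hc) hz)
    apply hq1
    refine ⟨((Q.takeUntil q₁ hm1).takeUntil q₂ hc).concat h2, ?_⟩
    rw [SimpleGraph.Walk.support_concat, List.mem_append]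
    rintro (h | h)
    · exact hq1notin h
    · rw [List.mem_singleton] at h; exact h1.ne h
  · have hznotin : z ∉ (Q.takeUntil q₁ hm1).support :=
      endp_not_mem_takeUntil Q hQpath hm1 h1.ne
    apply hq2
    refine ⟨(Q.takeUntil q₁ hm1).concat h1, ?_⟩
    rw [SimpleGraph.Walk.support_concat, List.mem_append]
    rintro (h | h)
    · exact hc h
    · rw [List.mem_singleton] at h; exact h2.ne h

/-- Subtree closure: if every walk `c → z` passes `p`, `x` reaches `c` avoiding `z`,
then every walk `x → z` passes `p`. -/
lemma subtree_closure {p z c x : α} (hadj : (dirGraph E).Adj p z)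
    (hc : ¬ Avoid E p c z) (hxc : Avoid E z x c) : ¬ Avoid E p x z := by
  intro hAv
  by_cases hxcp : Avoid E p x c
  · apply hc
    obtain ⟨W1, h1⟩ := hxcp
    obtain ⟨W2, h2⟩ := hAv
    refine ⟨W1.reverse.append W2, ?_⟩
    rw [SimpleGraph.Walk.mem_support_append_iff, SimpleGraph.Walk.support_reverse, List.mem_reverse]
    tauto
  · obtain ⟨W, hW⟩ := hxc
    rw [not_avoid_iff] at hxcp
    have hpW : p ∈ W.support := hxcp W
    have : Avoid E z x p := by
      refine ⟨W.takeUntil p hpW, ?_⟩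
      intro hz
      exact hW ((SimpleGraph.Walk.support_takeUntil_subset _ hpW) hz)
    exact tree_alt htree hadj ⟨hAv, this⟩
end Tree


/-! ### Position lemmas -/

section Pos
variable {n : ℕ} {E : Fin n → Fin n → Prop} {σ : Equiv.Perm (Fin n)}

lemma reach_pos_le (hlin : IsLinExt E σ) {x y : Fin n}
    (h : Relation.ReflTransGen E x y) : σ.symm x ≤ σ.symm y := by
  induction h with
  | refl => exact le_rfl
  | tail _ hbc ih => exact le_of_lt (lt_of_le_of_lt ih (hlin _ _ hbc))

lemma reach_antisymm (hlin : IsLinExt E σ) {x y : Fin n}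
    (h1 : Relation.ReflTransGen E x y) (h2 : Relation.ReflTransGen E y x) : x = y :=
  σ.symm.injective (le_antisymm (reach_pos_le hlin h1) (reach_pos_le hlin h2))

lemma E_ne (hlin : IsLinExt E σ) {x y : Fin n} (h : E x y) : x ≠ y :=
  fun he => absurd (hlin x y h) (by rw [he]; exact lt_irrefl _)

lemma E_not_symm (hlin : IsLinExt E σ) {x y : Fin n} (h : E x y) (h' : E y x) : False :=
  absurd (hlin x y h) (not_lt_of_gt (hlin y x h'))

lemma reach_E_eq (hlin : IsLinExt E σ) {x y : Fin n}
    (h1 : Relation.ReflTransGen E x y) (h2 : E y x) : False :=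
  absurd (hlin y x h2) (not_lt_of_ge (reach_pos_le hlin h1))

/-- Incomparability to a fixed vertex. -/
def Incomp (E : Fin n → Fin n → Prop) (z x : Fin n) : Prop :=
  x ≠ z ∧ ¬ Relation.ReflTransGen E x z ∧ ¬ Relation.ReflTransGen E z x

lemma adj_E (hlin : IsLinExt E σ) {x y : Fin n} (h : E x y) : (dirGraph E).Adj x y :=
  ⟨E_ne hlin h, Or.inl h⟩

end Pos

/-! ### Transition finder and pinch lemma -/

section Pinch
variable {n : ℕ} {E : Fin n → Fin n → Prop} {σ : Equiv.Perm (Fin n)}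

lemma find_transition (htree : (dirGraph E).IsTree) (hlin : IsLinExt E σ)
    {z w : Fin n} (hw : E w z) {u : Fin n} (P : (dirGraph E).Walk u z) :
    P.IsPath → Incomp E z u → ¬ Avoid E w u z →
    ∃ x₀ y₀ y₀' : Fin n, Incomp E z x₀ ∧ Relation.ReflTransGen E y₀ z ∧ y₀ ≠ z ∧
      E y₀ x₀ ∧ E y₀ y₀' ∧ Relation.ReflTransGen E y₀' z ∧
      ¬ Avoid E x₀ u y₀ ∧ ¬ Avoid E w y₀ z := by
  induction P with
  | nil => exact fun _ hu _ => absurd rfl hu.1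
  | @cons u v z h P' ih =>
      intro hP hu hwu
      have hPP' : P'.IsPath := hP.of_cons
      have hvz : v ≠ z → ¬ Avoid E w v z := by
        intro hvne
        -- w is on the path P'
        have hwne : w ≠ u := by
          rintro rfl
          exact hu.2.1 (Relation.ReflTransGen.single hw)
        have hwP : w ∈ (SimpleGraph.Walk.cons h P').support :=
          not_avoid_iff.mp hwu _
        rw [SimpleGraph.Walk.support_cons, List.mem_cons] at hwP
        have hwP' : w ∈ P'.support := hwP.resolve_left hwne
        rw [not_avoid_iff]
        intro W
        exact path_support_subset htree P' W hPP' hwP'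
      by_cases hveq : v = z
      · subst hveq
        exfalso
        rcases h.2 with hE | hE
        · exact hu.2.1 (Relation.ReflTransGen.single hE)
        · exact hu.2.2 (Relation.ReflTransGen.single hE)
      · by_cases hvcomp : Relation.ReflTransGen E v z
        · -- transition found at (u, v)
          have hEvu : E v u := by
            rcases h.2 with hE | hE
            · exact absurd (Relation.ReflTransGen.head hE hvcomp) hu.2.1
            · exact hE
          obtain ⟨y₀', hE', hreach'⟩ := ((Relation.ReflTransGen.cases_head hvcomp).resolve_left hveq)
          exact ⟨u, v, y₀', hu, hvcomp, hveq, hEvu, hE', hreach',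
            not_avoid_start, hvz hveq⟩
        · -- v is also incomparable; recurse
          have hvzreach : ¬ Relation.ReflTransGen E z v := by
            intro hzv
            -- then every vertex of the unique path v→z is reachable from z,
            -- in particular w, contradiction
            obtain ⟨W, hW⟩ := chain_walk hzv
            have hwP' : w ∈ W.reverse.support := by
              apply path_support_subset htree P' W.reverse hPP'
              have hwP : w ∈ (SimpleGraph.Walk.cons h P').support :=
                not_avoid_iff.mp hwu _
              rw [SimpleGraph.Walk.support_cons, List.mem_cons] at hwP
              refine hwP.resolve_left ?_
              rintro rfl
              exact hu.2.1 (Relation.ReflTransGen.single hw)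
            rw [SimpleGraph.Walk.support_reverse, List.mem_reverse] at hwP'
            have := (hW w hwP').1
            -- Reach z w together with E w z is absurd
            exact reach_E_eq hlin this hw
          obtain ⟨x₀, y₀, y₀', hx₀, hy₀, hy₀z, hE1, hE2, hr, hav, hwz⟩ :=
            ih hw hPP' ⟨hveq, hvcomp, hvzreach⟩ (hvz hveq)
          refine ⟨x₀, y₀, y₀', hx₀, hy₀, hy₀z, hE1, hE2, hr, ?_, hwz⟩
          -- lift ¬Avoid x₀ v y₀ to u through the edge u–v
          apply subtree_closure htree (p := x₀) (c := v)
          · exact (adj_E hlin hE1).symm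
          · exact hav
          · apply avoid_adj h
            · rintro rfl
              exact hu.2.1 hy₀
            · rintro rfl
              exact hvcomp hy₀
  
end Pinch

section Pinch2
variable {n : ℕ} {E : Fin n → Fin n → Prop} {σ : Equiv.Perm (Fin n)}

/-- Lift: `M` in the subtree of `z` via `n₁` lies in the subtree of `y₀` via `y₀'`,
where `y₀` sits in the subtree of `z` via a child `w` and reaches `z` via `y₀'`. -/
lemma lift_subtree (htree : (dirGraph E).IsTree) (hlin : IsLinExt E σ)
    {z n₁ w y₀ y₀' M : Fin n} (hn₁ : E z n₁) (hw : E w z)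
    (hM : ¬ Avoid E n₁ M z) (hy₀ : ¬ Avoid E w y₀ z)
    (hEy : E y₀ y₀') (hry : Relation.ReflTransGen E y₀' z) :
    ¬ Avoid E y₀' M y₀ := by
  intro hAv
  have hn₁w : n₁ ≠ w := by
    rintro rfl
    exact E_not_symm hlin hn₁ hw
  -- Avoid E y₀ M z
  have havMz : Avoid E y₀ M z := by
    by_contra hMz
    -- then every walk M → z passes y₀, hence also w; combined with n₁ : contradiction
    have hwMz : ¬ Avoid E w M z := by
      rw [not_avoid_iff]
      intro W
      have hy₀W : y₀ ∈ W.support := not_avoid_iff.mp hMz W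
      have : w ∈ (W.dropUntil y₀ hy₀W).support := not_avoid_iff.mp hy₀ _
      exact SimpleGraph.Walk.support_dropUntil_subset _ hy₀W this
    exact two_neighbours htree ((adj_E hlin hn₁).symm) (adj_E hlin hw) hn₁w hM hwMz
  -- Avoid E y₀ z y₀'
  have havzy : Avoid E y₀ z y₀' := by
    apply Avoid.symm
    apply avoid_of_chain hry
    intro v h1 h2 heq
    subst heq
    exact reach_E_eq hlin h1 hEy
  exact tree_alt htree (adj_E hlin hEy).symm ⟨hAv, havMz.trans havzy⟩

/-- The pinch lemma: a vertex incomparable to a two-parent node `z` lying in the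
two parent subtrees' "shadow" is pushed outside `(M, m)`. -/
lemma pinch (htree : (dirGraph E).IsTree) (hsep : IsSepTree E) (hlin : IsLinExt E σ)
    {z n₁ n₂ M m x : Fin n} (hn₁ : E z n₁) (hn₂ : E z n₂) (hne : n₁ ≠ n₂)
    (hM : ¬ Avoid E n₁ M z) (hm : ¬ Avoid E n₂ m z)
    (hx1 : Avoid E n₁ x z) (hx2 : Avoid E n₂ x z) (hinc : Incomp E z x) :
    (x < M ∧ x < m) ∨ (M < x ∧ m < x) := by
  -- find the child w through which x hangs
  obtain ⟨q, hadj, hqn, hqa⟩ := penult htree hinc.1 (htree.isConnected.preconnected x z)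
  have hEqz : E q z := by
    rcases hadj.2 with hE | hE
    · exact hE
    · -- q is a parent of z, hence q = n₁ or q = n₂, contradiction
      exfalso
      rcases hsep.2.1 z n₁ hn₁ n₂ hn₂ q hE with h | h | h
      · exact hne h
      · subst h; exact hqn hx1
      · subst h; exact hqn hx2
  -- find the transition
  obtain ⟨Q, hQ, -⟩ := htree.existsUnique_path x z
  have hQpath : Q.IsPath := by
    have h2 := (htree.existsUnique_path x z).unique
      (y₁ := (Q.toPath : (dirGraph E).Walk x z)) (y₂ := Q) (Q.toPath).2 hQ
    rw [← h2]; exact (Q.toPath).2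
  obtain ⟨x₀, y₀, y₀', hx₀, hy₀, hy₀z, hE1, hE2, hr, hav, hwz⟩ :=
    find_transition htree hlin hEqz Q hQpath hinc hqn
  have hx₀y₀' : x₀ ≠ y₀' := by
    rintro rfl
    exact hx₀.2.1 hr
  -- straddle at y₀ between parents x₀ and y₀'
  have hsepa := hsep.2.2.2.1 y₀ x₀ y₀' hE1 hE2 hx₀y₀'
  have hxin : inSub E y₀ x₀ x := inSub_iff_not_avoid.mpr hav
  have hMin : inSub E y₀ y₀' M := inSub_iff_not_avoid.mpr
    (lift_subtree htree hlin hn₁ hEqz hM hwz hE2 hr)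
  have hmin : inSub E y₀ y₀' m := inSub_iff_not_avoid.mpr
    (lift_subtree htree hlin hn₂ hEqz hm hwz hE2 hr)
  rcases hsepa x M hxin hMin with ⟨h1, h2⟩ | ⟨h1, h2⟩
  · rcases hsepa x m hxin hmin with ⟨h3, h4⟩ | ⟨h3, h4⟩
    · exact Or.inl ⟨lt_trans h1 h2, lt_trans h3 h4⟩
    · exact absurd h1 (not_lt_of_gt h4)
  · rcases hsepa x m hxin hmin with ⟨h3, h4⟩ | ⟨h3, h4⟩
    · exact absurd h3 (not_lt_of_gt h2)
    · exact Or.inr ⟨lt_trans h1 h2, lt_trans h3 h4⟩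

end Pinch2

section Tri
variable {n : ℕ} {E : Fin n → Fin n → Prop} {σ : Equiv.Perm (Fin n)}

lemma avoid_start_dropUntil {v j z : Fin n} (P' : (dirGraph E).Walk v j)
    (hP' : P'.IsPath) (hz : z ∈ P'.support) (hzv : z ≠ v) : Avoid E v j z := by
  refine ⟨(P'.dropUntil z hz).reverse, ?_⟩
  rw [SimpleGraph.Walk.support_reverse, List.mem_reverse]
  intro hv
  have hnd : P'.support.Nodup := hP'.support_nodup
  rw [← P'.take_spec hz, SimpleGraph.Walk.support_append] at hnd
  have hdisj := List.disjoint_of_nodup_append hnd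
  have hvtake : v ∈ (P'.takeUntil z hz).support := SimpleGraph.Walk.start_mem_support _
  have hvtail : v ∈ (P'.dropUntil z hz).support.tail := by
    rw [SimpleGraph.Walk.mem_support_iff] at hv
    exact hv.resolve_left (fun h => hzv h.symm)
  exact hdisj hvtake hvtail

lemma not_avoid_nil {z q : Fin n} (h : ¬ Avoid E q z z) : q = z := by
  rw [not_avoid_iff] at h
  have := h SimpleGraph.Walk.nil
  simpa using this

/-- Trichotomy for a path from `c` to `j` in a separating tree: either a directed
chain in one of the two directions, or a first extremum (peak / valley). -/
lemma trichotomy (htree : (dirGraph E).IsTree) (hlin : IsLinExt E σ)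
    {c j : Fin n} (P : (dirGraph E).Walk c j) : P.IsPath → c ≠ j →
    Relation.ReflTransGen E c j ∨ Relation.ReflTransGen E j c ∨
    (∃ z n₁ n₂ : Fin n, E n₁ z ∧ E n₂ z ∧ n₁ ≠ n₂ ∧ Relation.ReflTransGen E c z ∧
      ¬ Avoid E n₁ c z ∧ ¬ Avoid E n₂ j z ∧ z ∈ P.support) ∨
    (∃ z n₁ n₂ : Fin n, E z n₁ ∧ E z n₂ ∧ n₁ ≠ n₂ ∧ Relation.ReflTransGen E z c ∧
      ¬ Avoid E n₁ c z ∧ ¬ Avoid E n₂ j z ∧ z ∈ P.support) := by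
  induction P with
  | nil => exact fun _ hcj => absurd rfl hcj
  | @cons c v j h P' ih =>
      intro hP hcj
      rw [SimpleGraph.Walk.cons_isPath_iff] at hP
      obtain ⟨hP', hcP'⟩ := hP
      by_cases hvj : v = j
      · subst hvj
        rcases h.2 with hE | hE
        · exact Or.inl (Relation.ReflTransGen.single hE)
        · exact Or.inr (Or.inl (Relation.ReflTransGen.single hE))
      · rcases ih hP' hvj with hvreach | hjreach | hpeak | hvalley
        · -- Reach v j
          rcases h.2 with hE | hE
          · exact Or.inl (Relation.ReflTransGen.head hE hvreach)
          · -- E v c : c is a parent of v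
            obtain ⟨p₁, hEp, hrp⟩ :=
              (Relation.ReflTransGen.cases_head hvreach).resolve_left hvj
            by_cases hpc : p₁ = c
            · subst hpc; exact Or.inl hrp
            · -- valley at v with parents c and p₁
              refine Or.inr (Or.inr (Or.inr ⟨v, c, p₁, hE, hEp, fun hcc => hpc hcc.symm,
                Relation.ReflTransGen.single hE, not_avoid_start, ?_,
                by rw [SimpleGraph.Walk.support_cons]
                   exact List.mem_cons_of_mem _ (SimpleGraph.Walk.start_mem_support P')⟩))
              apply subtree_closure htree (adj_E hlin hEp).symm not_avoid_start
              apply Avoid.symm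
              apply avoid_of_chain hrp
              intro t h1 h2 heq
              subst heq
              exact reach_E_eq hlin h1 hEp
        · -- Reach j v
          rcases h.2 with hE | hE
          · -- E c v : peak candidate at v
            obtain ⟨y, hry, hEy⟩ :=
              (Relation.ReflTransGen.cases_tail hjreach).resolve_left hvj
            by_cases hyc : y = c
            · subst hyc; exact Or.inr (Or.inl hry)
            · refine Or.inr (Or.inr (Or.inl ⟨v, c, y, hE, hEy, fun hcc => hyc hcc.symm,
                Relation.ReflTransGen.single hE, not_avoid_start, ?_,
                by rw [SimpleGraph.Walk.support_cons]
                   exact List.mem_cons_of_mem _ (SimpleGraph.Walk.start_mem_support P')⟩))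
              apply subtree_closure htree (adj_E hlin hEy) not_avoid_start
              apply avoid_of_chain hry
              intro t h1 h2 heq
              subst heq
              exact reach_E_eq hlin h2 hEy
          · exact Or.inr (Or.inl (Relation.ReflTransGen.tail hjreach hE))
        · -- peak z for (v, j)
          obtain ⟨z, n₁, n₂, hEn₁, hEn₂, hne, hrvz, hav1, hav2, hzsup⟩ := hpeak
          have hzv : z ≠ v := by
            rintro rfl
            exact E_ne hlin hEn₁ (not_avoid_nil hav1)
          have hzc : z ≠ c := fun hh => hcP' (hh ▸ hzsup)
          rcases h.2 with hE | hE
          · -- E c v : ascend into the peak's side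
            refine Or.inr (Or.inr (Or.inl ⟨z, n₁, n₂, hEn₁, hEn₂, hne,
              Relation.ReflTransGen.head hE hrvz, ?_, hav2,
              by rw [SimpleGraph.Walk.support_cons]; exact List.mem_cons_of_mem _ hzsup⟩))
            exact subtree_closure htree (adj_E hlin hEn₁) hav1 (avoid_adj h hzc hzv)
          · -- E v c : c is a parent of v, and v ascends to z
            obtain ⟨p₁, hEp, hrp⟩ :=
              (Relation.ReflTransGen.cases_head hrvz).resolve_left hzv.symm
            by_cases hpc : p₁ = c
            · subst hpc
              refine Or.inr (Or.inr (Or.inl ⟨z, n₁, n₂, hEn₁, hEn₂, hne, hrp, ?_, hav2,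
                by rw [SimpleGraph.Walk.support_cons]; exact List.mem_cons_of_mem _ hzsup⟩))
              exact subtree_closure htree (adj_E hlin hEn₁) hav1 (avoid_adj h hzc hzv)
            · -- valley at v with parents c and p₁
              refine Or.inr (Or.inr (Or.inr ⟨v, c, p₁, hE, hEp, fun hcc => hpc hcc.symm,
                Relation.ReflTransGen.single hE, not_avoid_start, ?_,
                by rw [SimpleGraph.Walk.support_cons]
                   exact List.mem_cons_of_mem _ (SimpleGraph.Walk.start_mem_support P')⟩))
              apply subtree_closure htree (adj_E hlin hEp).symm not_avoid_start
              have havjz : Avoid E v j z := avoid_start_dropUntil P' hP' hzsup hzv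
              refine havjz.trans ?_
              apply Avoid.symm
              apply avoid_of_chain hrp
              intro t h1 h2 heq
              subst heq
              exact reach_E_eq hlin h1 hEp
        · -- valley z for (v, j)
          obtain ⟨z, n₁, n₂, hEn₁, hEn₂, hne, hrzv, hav1, hav2, hzsup⟩ := hvalley
          have hzv : z ≠ v := by
            rintro rfl
            exact E_ne hlin hEn₁ (not_avoid_nil hav1).symm
          have hzc : z ≠ c := fun hh => hcP' (hh ▸ hzsup)
          rcases h.2 with hE | hE
          · -- E c v : v is a parent of c... v descends to z
            obtain ⟨y, hry, hEy⟩ :=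
              (Relation.ReflTransGen.cases_tail hrzv).resolve_left (fun hh => hzv hh.symm)
            by_cases hyc : y = c
            · subst hyc
              refine Or.inr (Or.inr (Or.inr ⟨z, n₁, n₂, hEn₁, hEn₂, hne, hry, ?_, hav2,
                by rw [SimpleGraph.Walk.support_cons]; exact List.mem_cons_of_mem _ hzsup⟩))
              exact subtree_closure htree (adj_E hlin hEn₁).symm hav1 (avoid_adj h hzc hzv)
            · -- peak at v with children c and y
              refine Or.inr (Or.inr (Or.inl ⟨v, c, y, hE, hEy, fun hcc => hyc hcc.symm,
                Relation.ReflTransGen.single hE, not_avoid_start, ?_,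
                by rw [SimpleGraph.Walk.support_cons]
                   exact List.mem_cons_of_mem _ (SimpleGraph.Walk.start_mem_support P')⟩))
              apply subtree_closure htree (adj_E hlin hEy) not_avoid_start
              have havjz : Avoid E v j z := avoid_start_dropUntil P' hP' hzsup hzv
              refine havjz.trans ?_
              apply avoid_of_chain hry
              intro t h1 h2 heq
              subst heq
              exact reach_E_eq hlin h2 hEy
          · -- E v c : descend through the edge
            refine Or.inr (Or.inr (Or.inr ⟨z, n₁, n₂, hEn₁, hEn₂, hne,
              Relation.ReflTransGen.tail hrzv hE, ?_, hav2,
              by rw [SimpleGraph.Walk.support_cons]; exact List.mem_cons_of_mem _ hzsup⟩))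
            exact subtree_closure htree (adj_E hlin hEn₁).symm hav1 (avoid_adj h hzc hzv)

end Tri

section CL
variable {n : ℕ} {E : Fin n → Fin n → Prop} {σ : Equiv.Perm (Fin n)}

/-- Every vertex strictly between the endpoints of an edge is comparable to an endpoint. -/
lemma edge_dichotomy (htree : (dirGraph E).IsTree) (hsep : IsSepTree E)
    (hlin : IsLinExt E σ) {a b x : Fin n} (hadj : (dirGraph E).Adj a b)
    (hab : a < b) (hax : a < x) (hxb : x < b) :
    (Relation.ReflTransGen E x a ∨ Relation.ReflTransGen E x b) ∨
    (Relation.ReflTransGen E a x ∨ Relation.ReflTransGen E b x) := by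
  have hxa : x ≠ a := ne_of_gt hax
  have hxb' : x ≠ b := ne_of_lt hxb
  -- canonical path from x to a
  obtain ⟨Q, hQw, -⟩ := htree.existsUnique_path x a
  have hQpath : Q.IsPath := by
    have h2 := (htree.existsUnique_path x a).unique
      (y₁ := (Q.toPath : (dirGraph E).Walk x a)) (y₂ := Q) (Q.toPath).2 hQw
    rw [← h2]; exact (Q.toPath).2
  -- choose the nearer endpoint t with a path avoiding the other endpoint t'
  obtain ⟨t, t', ht, ht', hne, ρ, hρpath, hρavoid, hadj'⟩ :
      ∃ t t' : Fin n, (t = a ∧ t' = b ∨ t = b ∧ t' = a) ∧ True ∧ t ≠ t' ∧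
        ∃ ρ : (dirGraph E).Walk x t, ρ.IsPath ∧ t' ∉ ρ.support ∧ (dirGraph E).Adj t' t := by
    by_cases hbQ : b ∈ Q.support
    · refine ⟨b, a, Or.inr ⟨rfl, rfl⟩, trivial, ne_of_gt hab,
        Q.takeUntil b hbQ, hQpath.takeUntil hbQ, ?_, hadj⟩
      exact endp_not_mem_takeUntil Q hQpath hbQ (ne_of_gt hab)
    · exact ⟨a, b, Or.inl ⟨rfl, rfl⟩, trivial, ne_of_lt hab, Q, hQpath, hbQ, hadj.symm⟩
  have hxt : x ≠ t := by rcases ht with ⟨rfl, _⟩ | ⟨rfl, _⟩ <;> [exact hxa; exact hxb']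
  rcases trichotomy htree hlin ρ hρpath hxt with hr | hr | hpeak | hvalley
  · rcases ht with ⟨rfl, _⟩ | ⟨rfl, _⟩
    · exact Or.inl (Or.inl hr)
    · exact Or.inl (Or.inr hr)
  · rcases ht with ⟨rfl, _⟩ | ⟨rfl, _⟩
    · exact Or.inr (Or.inl hr)
    · exact Or.inr (Or.inr hr)
  · -- peak: contradiction via the children separation at z
    exfalso
    obtain ⟨z, n₁, n₂, hEn₁, hEn₂, hnz, hrxz, hav1, hav2, hzsup⟩ := hpeak
    have hzt : z ≠ t := by
      rintro rfl
      exact E_ne hlin hEn₂ (not_avoid_nil hav2)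
    have hzt' : z ≠ t' := fun hh => hρavoid (hh ▸ hzsup)
    have hav2' : ¬ Avoid E n₂ t' z :=
      subtree_closure htree (adj_E hlin hEn₂) hav2 (avoid_adj hadj' hzt' hzt)
    have hsepa := hsep.2.2.2.2 z n₁ n₂ hEn₁ hEn₂ hnz
    have h1 := hsepa x t (inSub_iff_not_avoid.mpr hav1) (inSub_iff_not_avoid.mpr hav2)
    have h2 := hsepa x t' (inSub_iff_not_avoid.mpr hav1) (inSub_iff_not_avoid.mpr hav2')
    rcases ht with ⟨rfl, rfl⟩ | ⟨rfl, rfl⟩ <;>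
      rcases h1 with ⟨k1, k2⟩ | ⟨k1, k2⟩ <;> rcases h2 with ⟨k3, k4⟩ | ⟨k3, k4⟩ <;>
      simp only [Fin.lt_def] at hax hxb hab k1 k2 k3 k4 <;> omega
  · -- valley: contradiction via the parents separation at z
    exfalso
    obtain ⟨z, n₁, n₂, hEn₁, hEn₂, hnz, hrxz, hav1, hav2, hzsup⟩ := hvalley
    have hzt : z ≠ t := by
      rintro rfl
      exact E_ne hlin hEn₂ (not_avoid_nil hav2).symm
    have hzt' : z ≠ t' := fun hh => hρavoid (hh ▸ hzsup)
    have hav2' : ¬ Avoid E n₂ t' z :=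
      subtree_closure htree (adj_E hlin hEn₂).symm hav2 (avoid_adj hadj' hzt' hzt)
    have hsepa := hsep.2.2.2.1 z n₁ n₂ hEn₁ hEn₂ hnz
    have h1 := hsepa x t (inSub_iff_not_avoid.mpr hav1) (inSub_iff_not_avoid.mpr hav2)
    have h2 := hsepa x t' (inSub_iff_not_avoid.mpr hav1) (inSub_iff_not_avoid.mpr hav2')
    rcases ht with ⟨rfl, rfl⟩ | ⟨rfl, rfl⟩ <;>
      rcases h1 with ⟨k1, k2⟩ | ⟨k1, k2⟩ <;> rcases h2 with ⟨k3, k4⟩ | ⟨k3, k4⟩ <;>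
      simp only [Fin.lt_def] at hax hxb hab k1 k2 k3 k4 <;> omega

lemma edge_not_both (htree : (dirGraph E).IsTree) (hlin : IsLinExt E σ)
    {a b x : Fin n} (hadj : (dirGraph E).Adj a b) (hxa : x ≠ a) (hxb : x ≠ b)
    (h1 : Relation.ReflTransGen E x a ∨ Relation.ReflTransGen E x b)
    (h2 : Relation.ReflTransGen E a x ∨ Relation.ReflTransGen E b x) : False := by
  have key : ∀ (u v : Fin n), (dirGraph E).Adj u v →
      Relation.ReflTransGen E x u → Relation.ReflTransGen E v x → x ≠ u → x ≠ v → False := by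
    intro u v huv hxu hvx hxu' hxv'
    have htalt := tree_alt htree huv (x := x)
    rw [not_and_or] at htalt
    rcases htalt with hna | hna
    · obtain ⟨W, hW⟩ := chain_walk hvx
      have hu : u ∈ W.reverse.support := not_avoid_iff.mp hna W.reverse
      rw [SimpleGraph.Walk.support_reverse, List.mem_reverse] at hu
      exact hxu' (reach_antisymm hlin hxu (hW u hu).2)
    · obtain ⟨W, hW⟩ := chain_walk hxu
      have hv : v ∈ W.support := not_avoid_iff.mp hna W
      exact hxv' (reach_antisymm hlin (hW v hv).1 hvx)
  rcases h1 with ha | hb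
  · rcases h2 with ha' | hb'
    · exact hxa (reach_antisymm hlin ha ha')
    · exact key a b hadj ha hb' hxa hxb
  · rcases h2 with ha' | hb'
    · exact key b a hadj.symm hb ha' hxb hxa
    · exact hxb (reach_antisymm hlin hb hb')

end CL

open scoped Classical in
lemma exists_mand {n : ℕ} {E : Fin n → Fin n → Prop} {σ : Equiv.Perm (Fin n)}
    (htree : (dirGraph E).IsTree) (hsep : IsSepTree E) (hlin : IsLinExt E σ)
    {a b : Fin n} (hE : E a b ∨ E b a) (hab : a < b) :
    ∃ μ : Arc n, MandatoryArc E μ ∧ μ.a = a ∧ μ.b = b ∧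
      μ.A = (Finset.Ioo a b).filter
        (fun x => Relation.ReflTransGen E x a ∨ Relation.ReflTransGen E x b) ∧
      μ.B = (Finset.Ioo a b).filter
        (fun x => Relation.ReflTransGen E a x ∨ Relation.ReflTransGen E b x) := by
  have hadj : (dirGraph E).Adj a b := by
    rcases hE with h | h
    exacts [adj_E hlin h, (adj_E hlin h).symm]
  refine ⟨⟨a, b,
    (Finset.Ioo a b).filter
      (fun x => Relation.ReflTransGen E x a ∨ Relation.ReflTransGen E x b),
    (Finset.Ioo a b).filter
      (fun x => Relation.ReflTransGen E a x ∨ Relation.ReflTransGen E b x),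
    hab, ?_, ?_⟩, ⟨hE, ?_⟩, rfl, rfl, rfl, rfl⟩
  · rw [Finset.disjoint_left]
    intro x hx1 hx2
    rw [Finset.mem_filter, Finset.mem_Ioo] at hx1 hx2
    exact edge_not_both htree hlin hadj (ne_of_gt hx1.1.1) (ne_of_lt hx1.1.2) hx1.2 hx2.2
  · ext x
    simp only [Finset.mem_union, Finset.mem_filter, Finset.mem_Ioo]
    constructor
    · rintro (⟨h, -⟩ | ⟨h, -⟩) <;> exact h
    · intro hx
      rcases edge_dichotomy htree hsep hlin hadj hab hx.1 hx.2 with h | h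
      · exact Or.inl ⟨hx, h⟩
      · exact Or.inr ⟨hx, h⟩
  · intro j hj1 hj2
    constructor <;>
      simp only [Finset.mem_filter, Finset.mem_Ioo, hj1, hj2, and_self, true_and]

section Main
variable {n : ℕ} {E F : Fin n → Fin n → Prop} {σ : Equiv.Perm (Fin n)}

lemma comm_reach (hlinE : IsLinExt E σ) {j : Fin n}
    (hdiv : ∀ v : Fin n, σ.symm v < σ.symm j → ∀ u, E u v ↔ F u v)
    {x y : Fin n} (h : Relation.ReflTransGen E x y) (hy : σ.symm y < σ.symm j) :
    Relation.ReflTransGen F x y := by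
  induction h with
  | refl => exact Relation.ReflTransGen.refl
  | @tail b y hxb hby ih =>
      have hb : σ.symm b < σ.symm j := lt_trans (hlinE _ _ hby) hy
      exact (ih hb).tail ((hdiv y hy b).mp hby)

open scoped Classical in
lemma peak_lt (I : Set (Arc n)) (hI : IsArcIdeal I)
    (hadmE : AdmissibleTree I E) (hadmF : AdmissibleTree I F)
    (hlinE : IsLinExt E σ) (hlinF : IsLinExt F σ)
    {j c : Fin n} (hc : E c j) (hcj : c < j)
    (hdiv : ∀ v : Fin n, σ.symm v < σ.symm j → ∀ u, E u v ↔ F u v)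
    {z n₁ n₂ : Fin n} (hn₁ : F n₁ z) (hn₂ : F n₂ z) (hne : n₁ ≠ n₂)
    (hrcz : Relation.ReflTransGen F c z)
    (hav1 : ¬ Avoid F n₁ c z) (hav2 : ¬ Avoid F n₂ j z) : False := by
  obtain ⟨hsepE, hmandE, hforbE⟩ := hadmE
  obtain ⟨hsepF, hmandF, hforbF⟩ := hadmF
  have htreeE := hsepE.1
  have htreeF := hsepF.1
  -- straddle at z in F
  have hsepa := hsepF.2.2.2.2 z n₁ n₂ hn₁ hn₂ hne
  have hczj : c < z ∧ z < j := by
    rcases hsepa c j (inSub_iff_not_avoid.mpr hav1) (inSub_iff_not_avoid.mpr hav2) with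
      h | h
    · exact h
    · exact absurd (lt_trans h.1 h.2) (not_lt_of_gt hcj)
  set S₁ : Finset (Fin n) := Finset.univ.filter (fun x => inSub F z n₁ x) with hS₁
  set S₂ : Finset (Fin n) := Finset.univ.filter (fun x => inSub F z n₂ x) with hS₂
  have hcS₁ : c ∈ S₁ := by
    rw [hS₁, Finset.mem_filter]
    exact ⟨Finset.mem_univ _, inSub_iff_not_avoid.mpr hav1⟩
  have hjS₂ : j ∈ S₂ := by
    rw [hS₂, Finset.mem_filter]
    exact ⟨Finset.mem_univ _, inSub_iff_not_avoid.mpr hav2⟩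
  have hS₁lt : ∀ x ∈ S₁, x < z := by
    intro x hx
    rw [hS₁, Finset.mem_filter] at hx
    rcases hsepa x j hx.2 (inSub_iff_not_avoid.mpr hav2) with h | h
    · exact h.1
    · exact absurd h.1 (not_lt_of_gt hczj.2)
  have hS₂gt : ∀ x ∈ S₂, z < x := by
    intro x hx
    rw [hS₂, Finset.mem_filter] at hx
    rcases hsepa c x (inSub_iff_not_avoid.mpr hav1) hx.2 with h | h
    · exact h.2
    · exact absurd h.2 (not_lt_of_gt hczj.1)
  set M : Fin n := S₁.max' ⟨c, hcS₁⟩ with hM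
  set m : Fin n := S₂.min' ⟨j, hjS₂⟩ with hm
  have hcM : c ≤ M := S₁.le_max' c hcS₁
  have hmj : m ≤ j := S₂.min'_le j hjS₂
  have hMz : M < z := hS₁lt M (S₁.max'_mem _)
  have hzm : z < m := hS₂gt m (S₂.min'_mem _)
  have hMm : M < m := lt_trans hMz hzm
  -- the mandatory arc of the edge (c, j) in E
  obtain ⟨μ, hmand, hμa, hμb, hμA, hμB⟩ :=
    exists_mand htreeE hsepE hlinE (Or.inl hc) hcj
  -- key inclusion
  have hkey : ∀ x : Fin n, M < x → x < m →
      Relation.ReflTransGen E c x ∨ Relation.ReflTransGen E j x := by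
    intro x hMx hxm
    have hcx : c < x := lt_of_le_of_lt hcM hMx
    have hxj : x < j := lt_of_lt_of_le hxm hmj
    have hcase1 : Relation.ReflTransGen E x c → False := by
      intro hr
      have hposc : σ.symm c < σ.symm j := hlinE _ _ hc
      have hrF : Relation.ReflTransGen F x c := comm_reach hlinE hdiv hr hposc
      have hzc : z ≠ c := by
        rintro rfl
        exact E_ne hlinF hn₁ (not_avoid_nil hav1)
      have hnrzc : ¬ Relation.ReflTransGen F z c := fun h =>
        hzc (reach_antisymm hlinF h hrcz)
      have hxS₁ : ¬ Avoid F n₁ x z :=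
        subtree_closure htreeF (adj_E hlinF hn₁) hav1
          (avoid_of_chain hrF (fun t _ h2 heq => hnrzc (heq ▸ h2)))
      have : x ∈ S₁ := by
        rw [hS₁, Finset.mem_filter]
        exact ⟨Finset.mem_univ _, inSub_iff_not_avoid.mpr hxS₁⟩
      exact absurd (S₁.le_max' x this) (not_le_of_gt hMx)
    rcases edge_dichotomy htreeE hsepE hlinE (adj_E hlinE hc) hcj hcx hxj with
      (hr | hr) | hr
    · exact (hcase1 hr).elim
    · -- Reach E x j
      rcases Relation.ReflTransGen.cases_tail hr with heq | ⟨c'', hrxc'', hEc''⟩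
      · exact absurd heq.symm (ne_of_lt hxj)
      · by_cases hcc : c'' = c
        · exact (hcase1 (hcc ▸ hrxc'')).elim
        · exfalso
          have hxSc'' : ¬ Avoid E c'' x j :=
            subtree_closure htreeE (adj_E hlinE hEc'') not_avoid_start
              (avoid_of_chain hrxc'' (fun t _ h2 heq =>
                reach_E_eq hlinE (heq ▸ h2) hEc''))
          have hsepj := hsepE.2.2.2.2 j c c'' hc hEc'' (fun h => hcc h.symm)
          rcases hsepj c x (inSub_iff_not_avoid.mpr not_avoid_start)
            (inSub_iff_not_avoid.mpr hxSc'') with h | h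
          · exact absurd h.2 (not_lt_of_gt hxj)
          · exact absurd h.2 (not_lt_of_gt hcj)
    · exact hr
  -- the forbidden down arc of F at z
  refine hforbF ⟨M, m, ∅, Finset.Ioo M m, hMm, by simp, by simp⟩ (Or.inr ?_) ?_
  · refine ⟨rfl, z, n₁, n₂, hn₁, hn₂, hne, ?_, ?_, ?_, ?_⟩
    · exact (Finset.mem_filter.mp (S₁.max'_mem ⟨c, hcS₁⟩)).2
    · intro x hx
      exact S₁.le_max' x (Finset.mem_filter.mpr ⟨Finset.mem_univ _, hx⟩)
    · exact (Finset.mem_filter.mp (S₂.min'_mem ⟨j, hjS₂⟩)).2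
    · intro x hx
      exact S₂.min'_le x (Finset.mem_filter.mpr ⟨Finset.mem_univ _, hx⟩)
  · -- it is a subarc of the mandatory arc, hence in I
    refine hI _ μ ⟨?_, ?_, ?_, ?_⟩ (hmandE μ hmand)
    · rw [hμa]; exact hcM
    · rw [hμb]; exact hmj
    · simp
    · rw [hμB]
      intro x hx
      rw [Finset.mem_Ioo] at hx
      rw [Finset.mem_filter, Finset.mem_Ioo]
      exact ⟨⟨lt_of_le_of_lt hcM hx.1, lt_of_lt_of_le hx.2 hmj⟩, hkey x hx.1 hx.2⟩


open scoped Classical in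
lemma valley_lt (I : Set (Arc n)) (hI : IsArcIdeal I)
    (hadmE : AdmissibleTree I E) (hadmF : AdmissibleTree I F)
    (hlinE : IsLinExt E σ) (hlinF : IsLinExt F σ)
    {j c : Fin n} (hc : E c j) (hcj : c < j)
    (hdiv : ∀ v : Fin n, σ.symm v < σ.symm j → ∀ u, E u v ↔ F u v)
    {z n₁ n₂ : Fin n} (hn₁ : F z n₁) (hn₂ : F z n₂) (hne : n₁ ≠ n₂)
    (hrzc : Relation.ReflTransGen F z c)
    (hav1 : ¬ Avoid F n₁ c z) (hav2 : ¬ Avoid F n₂ j z) : False := by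
  obtain ⟨hsepE, hmandE, hforbE⟩ := hadmE
  obtain ⟨hsepF, hmandF, hforbF⟩ := hadmF
  have htreeE := hsepE.1
  have htreeF := hsepF.1
  have hsepa := hsepF.2.2.2.1 z n₁ n₂ hn₁ hn₂ hne
  have hczj : c < z ∧ z < j := by
    rcases hsepa c j (inSub_iff_not_avoid.mpr hav1) (inSub_iff_not_avoid.mpr hav2) with
      h | h
    · exact h
    · exact absurd (lt_trans h.1 h.2) (not_lt_of_gt hcj)
  set S₁ : Finset (Fin n) := Finset.univ.filter (fun x => inSub F z n₁ x) with hS₁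
  set S₂ : Finset (Fin n) := Finset.univ.filter (fun x => inSub F z n₂ x) with hS₂
  have hcS₁ : c ∈ S₁ := by
    rw [hS₁, Finset.mem_filter]
    exact ⟨Finset.mem_univ _, inSub_iff_not_avoid.mpr hav1⟩
  have hjS₂ : j ∈ S₂ := by
    rw [hS₂, Finset.mem_filter]
    exact ⟨Finset.mem_univ _, inSub_iff_not_avoid.mpr hav2⟩
  have hS₁lt : ∀ x ∈ S₁, x < z := by
    intro x hx
    rw [hS₁, Finset.mem_filter] at hx
    rcases hsepa x j hx.2 (inSub_iff_not_avoid.mpr hav2) with h | h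
    · exact h.1
    · exact absurd h.1 (not_lt_of_gt hczj.2)
  have hS₂gt : ∀ x ∈ S₂, z < x := by
    intro x hx
    rw [hS₂, Finset.mem_filter] at hx
    rcases hsepa c x (inSub_iff_not_avoid.mpr hav1) hx.2 with h | h
    · exact h.2
    · exact absurd h.2 (not_lt_of_gt hczj.1)
  set M : Fin n := S₁.max' ⟨c, hcS₁⟩ with hM
  set m : Fin n := S₂.min' ⟨j, hjS₂⟩ with hm
  have hcM : c ≤ M := S₁.le_max' c hcS₁
  have hmj : m ≤ j := S₂.min'_le j hjS₂
  have hMz : M < z := hS₁lt M (S₁.max'_mem _)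
  have hzm : z < m := hS₂gt m (S₂.min'_mem _)
  have hMm : M < m := lt_trans hMz hzm
  obtain ⟨μ, hmand, hμa, hμb, hμA, hμB⟩ :=
    exists_mand htreeE hsepE hlinE (Or.inl hc) hcj
  have hposc : σ.symm c < σ.symm j := hlinE _ _ hc
  have hdiv' : ∀ v : Fin n, σ.symm v < σ.symm j → ∀ u, F u v ↔ E u v :=
    fun v hv u => (hdiv v hv u).symm
  -- key inclusion : everything in (M, m) is a descendant of c (hence of c or j) in E
  have hkey : ∀ x : Fin n, M < x → x < m →
      Relation.ReflTransGen E x c ∨ Relation.ReflTransGen E x j := by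
    intro x hMx hxm
    -- it suffices to reach c in F
    have hsuff : Relation.ReflTransGen F x c →
        Relation.ReflTransGen E x c ∨ Relation.ReflTransGen E x j :=
      fun h => Or.inl (comm_reach hlinF hdiv' h hposc)
    by_cases hxz : x = z
    · exact hsuff (hxz ▸ hrzc)
    by_cases hrxz : Relation.ReflTransGen F x z
    · exact hsuff (hrxz.trans hrzc)
    by_cases hrzx : Relation.ReflTransGen F z x
    · exfalso
      obtain ⟨p, hFzp, hrpx⟩ :=
        (Relation.ReflTransGen.cases_head hrzx).resolve_left (fun h => hxz h.symm)
      have havzxp : Avoid F z x p := by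
        apply Avoid.symm
        apply avoid_of_chain hrpx
        intro t h1 h2 heq
        rw [← heq] at h1
        exact reach_E_eq hlinF h1 hFzp
      have hxSp : ¬ Avoid F p x z :=
        subtree_closure htreeF (adj_E hlinF hFzp).symm not_avoid_start havzxp
      rcases hsepF.2.1 z n₁ hn₁ n₂ hn₂ p hFzp with h | h | h
      · exact hne h
      · subst h
        have : x ∈ S₁ := Finset.mem_filter.mpr
          ⟨Finset.mem_univ _, inSub_iff_not_avoid.mpr hxSp⟩
        exact absurd (S₁.le_max' x this) (not_le_of_gt hMx)
      · subst h
        have : x ∈ S₂ := Finset.mem_filter.mpr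
          ⟨Finset.mem_univ _, inSub_iff_not_avoid.mpr hxSp⟩
        exact absurd (S₂.min'_le x this) (not_le_of_gt hxm)
    · exfalso
      have hMmem : ¬ Avoid F n₁ M z :=
        inSub_iff_not_avoid.mp (Finset.mem_filter.mp (S₁.max'_mem ⟨c, hcS₁⟩)).2
      have hmmem : ¬ Avoid F n₂ m z :=
        inSub_iff_not_avoid.mp (Finset.mem_filter.mp (S₂.min'_mem ⟨j, hjS₂⟩)).2
      have hx1 : Avoid F n₁ x z := by
        by_contra hno
        have : x ∈ S₁ := Finset.mem_filter.mpr
          ⟨Finset.mem_univ _, inSub_iff_not_avoid.mpr hno⟩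
        exact absurd (S₁.le_max' x this) (not_le_of_gt hMx)
      have hx2 : Avoid F n₂ x z := by
        by_contra hno
        have : x ∈ S₂ := Finset.mem_filter.mpr
          ⟨Finset.mem_univ _, inSub_iff_not_avoid.mpr hno⟩
        exact absurd (S₂.min'_le x this) (not_le_of_gt hxm)
      rcases pinch htreeF hsepF hlinF hn₁ hn₂ hne hMmem hmmem hx1 hx2
        ⟨hxz, hrxz, hrzx⟩ with ⟨h1, -⟩ | ⟨-, h2⟩
      · exact absurd hMx (not_lt_of_gt h1)
      · exact absurd hxm (not_lt_of_gt h2)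
  refine hforbF ⟨M, m, Finset.Ioo M m, ∅, hMm, by simp, by simp⟩ (Or.inl ?_) ?_
  · refine ⟨rfl, z, n₁, n₂, hn₁, hn₂, hne, ?_, ?_, ?_, ?_⟩
    · exact (Finset.mem_filter.mp (S₁.max'_mem ⟨c, hcS₁⟩)).2
    · intro x hx
      exact S₁.le_max' x (Finset.mem_filter.mpr ⟨Finset.mem_univ _, hx⟩)
    · exact (Finset.mem_filter.mp (S₂.min'_mem ⟨j, hjS₂⟩)).2
    · intro x hx
      exact S₂.min'_le x (Finset.mem_filter.mpr ⟨Finset.mem_univ _, hx⟩)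
  · refine hI _ μ ⟨?_, ?_, ?_, ?_⟩ (hmandE μ hmand)
    · rw [hμa]; exact hcM
    · rw [hμb]; exact hmj
    · rw [hμA]
      intro x hx
      rw [Finset.mem_Ioo] at hx
      rw [Finset.mem_filter, Finset.mem_Ioo]
      exact ⟨⟨lt_of_le_of_lt hcM hx.1, lt_of_lt_of_le hx.2 hmj⟩, hkey x hx.1 hx.2⟩
    · simp


open scoped Classical in
lemma peak_gt (I : Set (Arc n)) (hI : IsArcIdeal I)
    (hadmE : AdmissibleTree I E) (hadmF : AdmissibleTree I F)
    (hlinE : IsLinExt E σ) (hlinF : IsLinExt F σ)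
    {j c : Fin n} (hc : E c j) (hjc : j < c)
    (hdiv : ∀ v : Fin n, σ.symm v < σ.symm j → ∀ u, E u v ↔ F u v)
    {z n₁ n₂ : Fin n} (hn₁ : F n₁ z) (hn₂ : F n₂ z) (hne : n₁ ≠ n₂)
    (hrcz : Relation.ReflTransGen F c z)
    (hav1 : ¬ Avoid F n₁ c z) (hav2 : ¬ Avoid F n₂ j z) : False := by
  obtain ⟨hsepE, hmandE, hforbE⟩ := hadmE
  obtain ⟨hsepF, hmandF, hforbF⟩ := hadmF
  have htreeE := hsepE.1
  have htreeF := hsepF.1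
  have hsepa := hsepF.2.2.2.2 z n₁ n₂ hn₁ hn₂ hne
  have hjzc : j < z ∧ z < c := by
    rcases hsepa c j (inSub_iff_not_avoid.mpr hav1) (inSub_iff_not_avoid.mpr hav2) with
      h | h
    · exact absurd (lt_trans h.1 h.2) (not_lt_of_gt hjc)
    · exact h
  set S₁ : Finset (Fin n) := Finset.univ.filter (fun x => inSub F z n₁ x) with hS₁
  set S₂ : Finset (Fin n) := Finset.univ.filter (fun x => inSub F z n₂ x) with hS₂
  have hcS₁ : c ∈ S₁ := by
    rw [hS₁, Finset.mem_filter]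
    exact ⟨Finset.mem_univ _, inSub_iff_not_avoid.mpr hav1⟩
  have hjS₂ : j ∈ S₂ := by
    rw [hS₂, Finset.mem_filter]
    exact ⟨Finset.mem_univ _, inSub_iff_not_avoid.mpr hav2⟩
  have hS₁gt : ∀ x ∈ S₁, z < x := by
    intro x hx
    rw [hS₁, Finset.mem_filter] at hx
    rcases hsepa x j hx.2 (inSub_iff_not_avoid.mpr hav2) with h | h
    · exact absurd h.2 (not_lt_of_gt hjzc.1)
    · exact h.2
  have hS₂lt : ∀ x ∈ S₂, x < z := by
    intro x hx
    rw [hS₂, Finset.mem_filter] at hx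
    rcases hsepa c x (inSub_iff_not_avoid.mpr hav1) hx.2 with h | h
    · exact absurd h.1 (not_lt_of_gt hjzc.2)
    · exact h.1
  set M : Fin n := S₂.max' ⟨j, hjS₂⟩ with hM
  set m : Fin n := S₁.min' ⟨c, hcS₁⟩ with hm
  have hjM : j ≤ M := S₂.le_max' j hjS₂
  have hmc : m ≤ c := S₁.min'_le c hcS₁
  have hMz : M < z := hS₂lt M (S₂.max'_mem _)
  have hzm : z < m := hS₁gt m (S₁.min'_mem _)
  have hMm : M < m := lt_trans hMz hzm
  obtain ⟨μ, hmand, hμa, hμb, hμA, hμB⟩ :=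
    exists_mand htreeE hsepE hlinE (Or.inr hc) hjc
  have hkey : ∀ x : Fin n, M < x → x < m →
      Relation.ReflTransGen E j x ∨ Relation.ReflTransGen E c x := by
    intro x hMx hxm
    have hjx : j < x := lt_of_le_of_lt hjM hMx
    have hxc : x < c := lt_of_lt_of_le hxm hmc
    have hcase1 : Relation.ReflTransGen E x c → False := by
      intro hr
      have hposc : σ.symm c < σ.symm j := hlinE _ _ hc
      have hrF : Relation.ReflTransGen F x c := comm_reach hlinE hdiv hr hposc
      have hzc : z ≠ c := by
        rintro rfl
        exact E_ne hlinF hn₁ (not_avoid_nil hav1)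
      have hnrzc : ¬ Relation.ReflTransGen F z c := fun h =>
        hzc (reach_antisymm hlinF h hrcz)
      have hxS₁ : ¬ Avoid F n₁ x z :=
        subtree_closure htreeF (adj_E hlinF hn₁) hav1
          (avoid_of_chain hrF (fun t _ h2 heq => hnrzc (heq ▸ h2)))
      have : x ∈ S₁ := by
        rw [hS₁, Finset.mem_filter]
        exact ⟨Finset.mem_univ _, inSub_iff_not_avoid.mpr hxS₁⟩
      exact absurd (S₁.min'_le x this) (not_le_of_gt hxm)
    rcases edge_dichotomy htreeE hsepE hlinE (adj_E hlinE hc).symm hjc hjx hxc with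
      (hr | hr) | hr
    · -- Reach E x j
      rcases Relation.ReflTransGen.cases_tail hr with heq | ⟨c'', hrxc'', hEc''⟩
      · exact absurd heq.symm (ne_of_gt hjx)
      · by_cases hcc : c'' = c
        · exact (hcase1 (hcc ▸ hrxc'')).elim
        · exfalso
          have hxSc'' : ¬ Avoid E c'' x j :=
            subtree_closure htreeE (adj_E hlinE hEc'') not_avoid_start
              (avoid_of_chain hrxc'' (fun t _ h2 heq =>
                reach_E_eq hlinE (heq ▸ h2) hEc''))
          have hsepj := hsepE.2.2.2.2 j c c'' hc hEc'' (fun h => hcc h.symm)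
          rcases hsepj c x (inSub_iff_not_avoid.mpr not_avoid_start)
            (inSub_iff_not_avoid.mpr hxSc'') with h | h
          · exact absurd h.1 (not_lt_of_gt hjc)
          · exact absurd h.1 (not_lt_of_gt hjx)
    · exact (hcase1 hr).elim
    · exact hr
  refine hforbF ⟨M, m, ∅, Finset.Ioo M m, hMm, by simp, by simp⟩ (Or.inr ?_) ?_
  · refine ⟨rfl, z, n₂, n₁, hn₂, hn₁, hne.symm, ?_, ?_, ?_, ?_⟩
    · exact (Finset.mem_filter.mp (S₂.max'_mem ⟨j, hjS₂⟩)).2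
    · intro x hx
      exact S₂.le_max' x (Finset.mem_filter.mpr ⟨Finset.mem_univ _, hx⟩)
    · exact (Finset.mem_filter.mp (S₁.min'_mem ⟨c, hcS₁⟩)).2
    · intro x hx
      exact S₁.min'_le x (Finset.mem_filter.mpr ⟨Finset.mem_univ _, hx⟩)
  · refine hI _ μ ⟨?_, ?_, ?_, ?_⟩ (hmandE μ hmand)
    · rw [hμa]; exact hjM
    · rw [hμb]; exact hmc
    · simp
    · rw [hμB]
      intro x hx
      rw [Finset.mem_Ioo] at hx
      rw [Finset.mem_filter, Finset.mem_Ioo]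
      exact ⟨⟨lt_of_le_of_lt hjM hx.1, lt_of_lt_of_le hx.2 hmc⟩, hkey x hx.1 hx.2⟩

open scoped Classical in
lemma valley_gt (I : Set (Arc n)) (hI : IsArcIdeal I)
    (hadmE : AdmissibleTree I E) (hadmF : AdmissibleTree I F)
    (hlinE : IsLinExt E σ) (hlinF : IsLinExt F σ)
    {j c : Fin n} (hc : E c j) (hjc : j < c)
    (hdiv : ∀ v : Fin n, σ.symm v < σ.symm j → ∀ u, E u v ↔ F u v)
    {z n₁ n₂ : Fin n} (hn₁ : F z n₁) (hn₂ : F z n₂) (hne : n₁ ≠ n₂)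
    (hrzc : Relation.ReflTransGen F z c)
    (hav1 : ¬ Avoid F n₁ c z) (hav2 : ¬ Avoid F n₂ j z) : False := by
  obtain ⟨hsepE, hmandE, hforbE⟩ := hadmE
  obtain ⟨hsepF, hmandF, hforbF⟩ := hadmF
  have htreeE := hsepE.1
  have htreeF := hsepF.1
  have hsepa := hsepF.2.2.2.1 z n₁ n₂ hn₁ hn₂ hne
  have hjzc : j < z ∧ z < c := by
    rcases hsepa c j (inSub_iff_not_avoid.mpr hav1) (inSub_iff_not_avoid.mpr hav2) with
      h | h
    · exact absurd (lt_trans h.1 h.2) (not_lt_of_gt hjc)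
    · exact h
  set S₁ : Finset (Fin n) := Finset.univ.filter (fun x => inSub F z n₁ x) with hS₁
  set S₂ : Finset (Fin n) := Finset.univ.filter (fun x => inSub F z n₂ x) with hS₂
  have hcS₁ : c ∈ S₁ := by
    rw [hS₁, Finset.mem_filter]
    exact ⟨Finset.mem_univ _, inSub_iff_not_avoid.mpr hav1⟩
  have hjS₂ : j ∈ S₂ := by
    rw [hS₂, Finset.mem_filter]
    exact ⟨Finset.mem_univ _, inSub_iff_not_avoid.mpr hav2⟩
  have hS₁gt : ∀ x ∈ S₁, z < x := by
    intro x hx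
    rw [hS₁, Finset.mem_filter] at hx
    rcases hsepa x j hx.2 (inSub_iff_not_avoid.mpr hav2) with h | h
    · exact absurd h.2 (not_lt_of_gt hjzc.1)
    · exact h.2
  have hS₂lt : ∀ x ∈ S₂, x < z := by
    intro x hx
    rw [hS₂, Finset.mem_filter] at hx
    rcases hsepa c x (inSub_iff_not_avoid.mpr hav1) hx.2 with h | h
    · exact absurd h.1 (not_lt_of_gt hjzc.2)
    · exact h.1
  set M : Fin n := S₂.max' ⟨j, hjS₂⟩ with hM
  set m : Fin n := S₁.min' ⟨c, hcS₁⟩ with hm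
  have hjM : j ≤ M := S₂.le_max' j hjS₂
  have hmc : m ≤ c := S₁.min'_le c hcS₁
  have hMz : M < z := hS₂lt M (S₂.max'_mem _)
  have hzm : z < m := hS₁gt m (S₁.min'_mem _)
  have hMm : M < m := lt_trans hMz hzm
  obtain ⟨μ, hmand, hμa, hμb, hμA, hμB⟩ :=
    exists_mand htreeE hsepE hlinE (Or.inr hc) hjc
  have hposc : σ.symm c < σ.symm j := hlinE _ _ hc
  have hdiv' : ∀ v : Fin n, σ.symm v < σ.symm j → ∀ u, F u v ↔ E u v :=
    fun v hv u => (hdiv v hv u).symm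
  have hkey : ∀ x : Fin n, M < x → x < m →
      Relation.ReflTransGen E x j ∨ Relation.ReflTransGen E x c := by
    intro x hMx hxm
    have hsuff : Relation.ReflTransGen F x c →
        Relation.ReflTransGen E x j ∨ Relation.ReflTransGen E x c :=
      fun h => Or.inr (comm_reach hlinF hdiv' h hposc)
    by_cases hxz : x = z
    · exact hsuff (hxz ▸ hrzc)
    by_cases hrxz : Relation.ReflTransGen F x z
    · exact hsuff (hrxz.trans hrzc)
    by_cases hrzx : Relation.ReflTransGen F z x
    · exfalso
      obtain ⟨p, hFzp, hrpx⟩ :=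
        (Relation.ReflTransGen.cases_head hrzx).resolve_left (fun h => hxz h.symm)
      have havzxp : Avoid F z x p := by
        apply Avoid.symm
        apply avoid_of_chain hrpx
        intro t h1 h2 heq
        rw [← heq] at h1
        exact reach_E_eq hlinF h1 hFzp
      have hxSp : ¬ Avoid F p x z :=
        subtree_closure htreeF (adj_E hlinF hFzp).symm not_avoid_start havzxp
      rcases hsepF.2.1 z n₁ hn₁ n₂ hn₂ p hFzp with h | h | h
      · exact hne h
      · subst h
        have : x ∈ S₁ := Finset.mem_filter.mpr
          ⟨Finset.mem_univ _, inSub_iff_not_avoid.mpr hxSp⟩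
        exact absurd (S₁.min'_le x this) (not_le_of_gt hxm)
      · subst h
        have : x ∈ S₂ := Finset.mem_filter.mpr
          ⟨Finset.mem_univ _, inSub_iff_not_avoid.mpr hxSp⟩
        exact absurd (S₂.le_max' x this) (not_le_of_gt hMx)
    · exfalso
      have hMmem : ¬ Avoid F n₂ M z :=
        inSub_iff_not_avoid.mp (Finset.mem_filter.mp (S₂.max'_mem ⟨j, hjS₂⟩)).2
      have hmmem : ¬ Avoid F n₁ m z :=
        inSub_iff_not_avoid.mp (Finset.mem_filter.mp (S₁.min'_mem ⟨c, hcS₁⟩)).2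
      have hx1 : Avoid F n₁ x z := by
        by_contra hno
        have : x ∈ S₁ := Finset.mem_filter.mpr
          ⟨Finset.mem_univ _, inSub_iff_not_avoid.mpr hno⟩
        exact absurd (S₁.min'_le x this) (not_le_of_gt hxm)
      have hx2 : Avoid F n₂ x z := by
        by_contra hno
        have : x ∈ S₂ := Finset.mem_filter.mpr
          ⟨Finset.mem_univ _, inSub_iff_not_avoid.mpr hno⟩
        exact absurd (S₂.le_max' x this) (not_le_of_gt hMx)
      rcases pinch htreeF hsepF hlinF hn₁ hn₂ hne hmmem hMmem hx1 hx2
        ⟨hxz, hrxz, hrzx⟩ with ⟨-, h1⟩ | ⟨h2, -⟩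
      · exact absurd hMx (not_lt_of_gt h1)
      · exact absurd hxm (not_lt_of_gt h2)
  refine hforbF ⟨M, m, Finset.Ioo M m, ∅, hMm, by simp, by simp⟩ (Or.inl ?_) ?_
  · refine ⟨rfl, z, n₂, n₁, hn₂, hn₁, hne.symm, ?_, ?_, ?_, ?_⟩
    · exact (Finset.mem_filter.mp (S₂.max'_mem ⟨j, hjS₂⟩)).2
    · intro x hx
      exact S₂.le_max' x (Finset.mem_filter.mpr ⟨Finset.mem_univ _, hx⟩)
    · exact (Finset.mem_filter.mp (S₁.min'_mem ⟨c, hcS₁⟩)).2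
    · intro x hx
      exact S₁.min'_le x (Finset.mem_filter.mpr ⟨Finset.mem_univ _, hx⟩)
  · refine hI _ μ ⟨?_, ?_, ?_, ?_⟩ (hmandE μ hmand)
    · rw [hμa]; exact hjM
    · rw [hμb]; exact hmc
    · rw [hμA]
      intro x hx
      rw [Finset.mem_Ioo] at hx
      rw [Finset.mem_filter, Finset.mem_Ioo]
      exact ⟨⟨lt_of_le_of_lt hjM hx.1, lt_of_lt_of_le hx.2 hmc⟩, hkey x hx.1 hx.2⟩
    · simp


lemma div_case (I : Set (Arc n)) (hI : IsArcIdeal I)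
    (hadmE : AdmissibleTree I E) (hadmF : AdmissibleTree I F)
    (hlinE : IsLinExt E σ) (hlinF : IsLinExt F σ)
    {j c : Fin n} (hc : E c j) (hnc : ¬ F c j)
    (hdiv : ∀ v : Fin n, σ.symm v < σ.symm j → ∀ u, E u v ↔ F u v) : False := by
  classical
  have htreeE := hadmE.1.1
  have htreeF := hadmF.1.1
  have hcj : c ≠ j := E_ne hlinE hc
  have hposc : σ.symm c < σ.symm j := hlinE _ _ hc
  have hdiv' : ∀ v : Fin n, σ.symm v < σ.symm j → ∀ u, F u v ↔ E u v :=
    fun v hv u => (hdiv v hv u).symm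
  -- the path from c to j in F
  obtain ⟨W⟩ := htreeF.isConnected.preconnected c j
  rcases trichotomy htreeF hlinF (W.toPath : (dirGraph F).Walk c j) (W.toPath).2 hcj with
    hr | hr | hpeak | hvalley
  · -- monotone ascending in F: swap the roles
    obtain ⟨c', hrcc', hFc'⟩ :=
      (Relation.ReflTransGen.cases_tail hr).resolve_left (fun h => hcj h.symm)
    have hc'c : c' ≠ c := by
      rintro rfl; exact hnc hFc'
    have hposc' : σ.symm c' < σ.symm j := hlinF _ _ hFc'
    have hrE : Relation.ReflTransGen E c c' := comm_reach hlinF hdiv' hrcc' hposc'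
    have hc'j : c' ≠ j := E_ne hlinF hFc'
    -- no E-edge from c' to j (otherwise two paths c–j in E)
    have hnEc' : ¬ E c' j := by
      intro hEc'
      refine tree_alt htreeE (adj_E hlinE hc) (x := c') ⟨?_, ?_⟩
      · exact avoid_adj (adj_E hlinE hEc') (Ne.symm hc'c) hcj
      · apply Avoid.symm
        apply avoid_of_chain hrE
        intro t h1 h2 heq
        rw [← heq] at h2
        exact reach_E_eq hlinE h2 hEc'
    -- path from c' to j in E
    obtain ⟨W'⟩ := htreeE.isConnected.preconnected c' j
    rcases trichotomy htreeE hlinE (W'.toPath : (dirGraph E).Walk c' j) (W'.toPath).2 hc'j with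
      hr' | hr' | hpeak' | hvalley'
    · -- both monotone: cycle in E
      obtain ⟨c'', hrc'c'', hEc''⟩ :=
        (Relation.ReflTransGen.cases_tail hr').resolve_left (fun h => hc'j h.symm)
      have hrcc'' : Relation.ReflTransGen E c c'' := hrE.trans hrc'c''
      have hc''c : c'' ≠ c := by
        rintro rfl
        exact hc'c (reach_antisymm hlinE hrc'c'' hrE)
      refine tree_alt htreeE (adj_E hlinE hc) (x := c'') ⟨?_, ?_⟩
      · exact avoid_adj (adj_E hlinE hEc'') (Ne.symm hc''c) hcj
      · apply Avoid.symm
        apply avoid_of_chain hrcc''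
        intro t h1 h2 heq
        rw [← heq] at h2
        exact reach_E_eq hlinE h2 hEc''
    · exact absurd (reach_pos_le hlinE hr') (not_le_of_gt hposc')
    · obtain ⟨z, n₁, n₂, hn₁, hn₂, hne, hrcz, hav1, hav2, -⟩ := hpeak'
      rcases lt_or_gt_of_ne hc'j with h | h
      · exact peak_lt I hI hadmF hadmE hlinF hlinE hFc' h hdiv' hn₁ hn₂ hne hrcz hav1 hav2
      · exact peak_gt I hI hadmF hadmE hlinF hlinE hFc' h hdiv' hn₁ hn₂ hne hrcz hav1 hav2
    · obtain ⟨z, n₁, n₂, hn₁, hn₂, hne, hrzc, hav1, hav2, -⟩ := hvalley'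
      rcases lt_or_gt_of_ne hc'j with h | h
      · exact valley_lt I hI hadmF hadmE hlinF hlinE hFc' h hdiv' hn₁ hn₂ hne hrzc hav1 hav2
      · exact valley_gt I hI hadmF hadmE hlinF hlinE hFc' h hdiv' hn₁ hn₂ hne hrzc hav1 hav2
  · exact absurd (reach_pos_le hlinF hr) (not_le_of_gt hposc)
  · obtain ⟨z, n₁, n₂, hn₁, hn₂, hne, hrcz, hav1, hav2, -⟩ := hpeak
    rcases lt_or_gt_of_ne hcj with h | h
    · exact peak_lt I hI hadmE hadmF hlinE hlinF hc h hdiv hn₁ hn₂ hne hrcz hav1 hav2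
    · exact peak_gt I hI hadmE hadmF hlinE hlinF hc h hdiv hn₁ hn₂ hne hrcz hav1 hav2
  · obtain ⟨z, n₁, n₂, hn₁, hn₂, hne, hrzc, hav1, hav2, -⟩ := hvalley
    rcases lt_or_gt_of_ne hcj with h | h
    · exact valley_lt I hI hadmE hadmF hlinE hlinF hc h hdiv hn₁ hn₂ hne hrzc hav1 hav2
    · exact valley_gt I hI hadmE hadmF hlinE hlinF hc h hdiv hn₁ hn₂ hne hrzc hav1 hav2

end Main

theorem stmt6' {n : ℕ} (I : Set (Arc n)) (hI : IsArcIdeal I)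
    (E E' : Fin n → Fin n → Prop)
    (hE : AdmissibleTree I E) (hE' : AdmissibleTree I E')
    (σ : Equiv.Perm (Fin n)) (h : IsLinExt E σ) (h' : IsLinExt E' σ) :
    E = E' := by
  classical
  by_contra hne
  have hex : ∃ v u : Fin n, ¬ (E u v ↔ E' u v) := by
    by_contra hcon
    simp only [not_exists, not_not] at hcon
    exact hne (funext fun a => funext fun b => propext (hcon b a))
  set D : Finset (Fin n) := Finset.univ.filter (fun v => ∃ u, ¬ (E u v ↔ E' u v)) with hD
  have hDne : D.Nonempty := by
    obtain ⟨v, u, hvu⟩ := hex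
    exact ⟨v, Finset.mem_filter.mpr ⟨Finset.mem_univ _, u, hvu⟩⟩
  obtain ⟨j, hjD, hjmin⟩ := D.exists_min_image (fun v => σ.symm v) hDne
  have hdiv : ∀ v : Fin n, σ.symm v < σ.symm j → ∀ u, E u v ↔ E' u v := by
    intro v hv u
    by_contra hvu
    have : v ∈ D := Finset.mem_filter.mpr ⟨Finset.mem_univ _, u, hvu⟩
    exact absurd (hjmin v this) (not_le_of_gt hv)
  obtain ⟨u, hu⟩ := (Finset.mem_filter.mp hjD).2
  by_cases hEu : E u j
  · have hnE' : ¬ E' u j := fun hh => hu ⟨fun _ => hh, fun _ => hEu⟩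
    exact div_case I hI hE hE' h h' hEu hnE' hdiv
  · have hE'u : E' u j := by
      by_contra hh
      exact hu ⟨fun k => absurd k hEu, fun k => absurd k hh⟩
    exact div_case I hI hE' hE h' h hE'u hEu (fun v hv u => (hdiv v hv u).symm)

end StmtSix

/-- two `≡`-admissible separating trees (for the same essential
congruence, given by its arc ideal `I`) having a common linear extension are equal. -/
theorem stmt6 {n : ℕ} (I : Set (Arc n)) (hI : IsArcIdeal I) (hess : EssentialIdeal I)
    (E E' : Fin n → Fin n → Prop)
    (hE : AdmissibleTree I E) (hE' : AdmissibleTree I E')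
    (σ : Equiv.Perm (Fin n)) (h : IsLinExt E σ) (h' : IsLinExt E' σ) :
    E = E' := by
  exact StmtSix.stmt6' I hI E E' hE hE' σ h h'
end

section
/- Let ≡ be an essential lattice congruence of the weak order on S_n whose arc ideal excludes some subarc-minimal arc α = (i,j,A,B) with A ≠ ∅ and B ≠ ∅. Let a = max(A) and b = min(B). Then the four arcs (i,a, A∩(i,a), B∩(i,a)), (a,j,∅,B∩(a,j)), (i,b,A∩(i,b),∅), and (b,j,A∩(b,j),B) all belong to the arc ideal of ≡, and the ≡-poset of the permutation whose noncrossing arc diagram is {α} has Hasse diagram containing the cover relations a ≺ i, a ≺ j, i ≺ b, j ≺ b; in particular this Hasse diagram is not a tree. -/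
open Relation Finset

/-- `(p, q)` is an ascending empty rectangle pair in the table of `σ`. -/
def EmptyRectUp {n : ℕ} (σ : Equiv.Perm (Fin n)) (p q : Fin n) : Prop :=
  p < q ∧ σ p < σ q ∧ ∀ v : Fin n, σ p < v → v < σ q → σ.symm v < p ∨ q < σ.symm v

/-- `(p, q)` is a descending empty rectangle pair in the table of `σ`. -/
def EmptyRectDown {n : ℕ} (σ : Equiv.Perm (Fin n)) (p q : Fin n) : Prop :=
  p < q ∧ σ q < σ p ∧ ∀ v : Fin n, σ q < v → v < σ p → σ.symm v < p ∨ q < σ.symm v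

/-- The arc `α↗(p, q, σ)` associated to an ascending empty rectangle pair. -/
def arcUp {n : ℕ} (σ : Equiv.Perm (Fin n)) (p q : Fin n) (h : EmptyRectUp σ p q) :
    Arc n where
  a := σ p
  b := σ q
  A := (Finset.Ioo (σ p) (σ q)).filter (fun v => σ.symm v < p)
  B := (Finset.Ioo (σ p) (σ q)).filter (fun v => q < σ.symm v)
  hab := h.2.1
  hdisj := by
    rw [Finset.disjoint_left]
    rintro v hv1 hv2
    simp only [Finset.mem_filter] at hv1 hv2
    exact absurd (hv1.2.trans h.1) (lt_asymm hv2.2)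
  hunion := by
    ext v
    simp only [Finset.mem_union, Finset.mem_filter, Finset.mem_Ioo]
    constructor
    · rintro (⟨hv, _⟩ | ⟨hv, _⟩) <;> exact hv
    · intro hv
      rcases h.2.2 v hv.1 hv.2 with h' | h'
      · exact Or.inl ⟨hv, h'⟩
      · exact Or.inr ⟨hv, h'⟩

/-- The arc `α↘(p, q, σ)` associated to a descending empty rectangle pair. -/
def arcDown {n : ℕ} (σ : Equiv.Perm (Fin n)) (p q : Fin n) (h : EmptyRectDown σ p q) :
    Arc n where
  a := σ q
  b := σ p
  A := (Finset.Ioo (σ q) (σ p)).filter (fun v => σ.symm v < p)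
  B := (Finset.Ioo (σ q) (σ p)).filter (fun v => q < σ.symm v)
  hab := h.2.1
  hdisj := by
    rw [Finset.disjoint_left]
    rintro v hv1 hv2
    simp only [Finset.mem_filter] at hv1 hv2
    exact absurd (hv1.2.trans h.1) (lt_asymm hv2.2)
  hunion := by
    ext v
    simp only [Finset.mem_union, Finset.mem_filter, Finset.mem_Ioo]
    constructor
    · rintro (⟨hv, _⟩ | ⟨hv, _⟩) <;> exact hv
    · intro hv
      rcases h.2.2 v hv.1 hv.2 with h' | h'
      · exact Or.inl ⟨hv, h'⟩
      · exact Or.inr ⟨hv, h'⟩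

/-- The slope order on ascending pairs: `(p, q) ⪯ (r, s)`. -/
def slopeLeUp {n : ℕ} (σ : Equiv.Perm (Fin n)) (p q r s : Fin n) : Prop :=
  r ≤ p ∧ q ≤ s ∧ σ r ≤ σ p ∧ σ q ≤ σ s

/-- The slope order on descending pairs: `(p, q) ⪯ (r, s)`. -/
def slopeLeDown {n : ℕ} (σ : Equiv.Perm (Fin n)) (p q r s : Fin n) : Prop :=
  r ≤ p ∧ q ≤ s ∧ σ s ≤ σ q ∧ σ p ≤ σ r

/-- `(p, q)` belongs to `⊠_≡(σ)`: it is a slope-maximal ascending empty rectangle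
pair whose associated arc lies in the arc ideal `I`. -/
def BoxUpSel {n : ℕ} (I : Set (Arc n)) (σ : Equiv.Perm (Fin n)) (p q : Fin n) : Prop :=
  ∃ h : EmptyRectUp σ p q, arcUp σ p q h ∈ I ∧
    ∀ (r s : Fin n) (h' : EmptyRectUp σ r s),
      arcUp σ r s h' ∈ I → slopeLeUp σ p q r s → r = p ∧ s = q

/-- `(p, q)` belongs to `⊠̄_≡(σ)`: it is a slope-maximal descending empty rectangle
pair whose associated arc lies in the arc ideal `I`. -/
def BoxDownSel {n : ℕ} (I : Set (Arc n)) (σ : Equiv.Perm (Fin n)) (p q : Fin n) : Prop :=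
  ∃ h : EmptyRectDown σ p q, arcDown σ p q h ∈ I ∧
    ∀ (r s : Fin n) (h' : EmptyRectDown σ r s),
      arcDown σ r s h' ∈ I → slopeLeDown σ p q r s → r = p ∧ s = q

/-- The Hasse diagram of the `≡`-poset of `σ` obtained by the insertion map:
cover relations `σ p ≺ σ q` for `(p, q) ∈ ⊠_≡(σ) ∪ ⊠̄_≡(σ)`. -/
def insEdge {n : ℕ} (I : Set (Arc n)) (σ : Equiv.Perm (Fin n)) (x y : Fin n) : Prop :=
  ∃ p q : Fin n, x = σ p ∧ y = σ q ∧ (BoxUpSel I σ p q ∨ BoxDownSel I σ p q)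

lemma mem_of_subarc_ne {n : ℕ} {I : Set (Arc n)} {α β : Arc n}
    (hmin : MinNonArc I α) (hsub : Subarc β α) (hne : β ≠ α) : β ∈ I := by
  by_contra h
  exact hne (hmin.2 β hsub h)

lemma slope_max_up {n : ℕ} (σ : Equiv.Perm (Fin n)) (p q : Fin n)
    (hpq : p < q) (hv : σ p < σ q) :
    ∀ r s : Fin n, EmptyRectUp σ r s → slopeLeUp σ p q r s → r = p ∧ s = q := by
  intro r s h' hle
  obtain ⟨hrp, hqs, hsr, hss⟩ := hle
  have hr : σ r = σ p := by
    rcases eq_or_lt_of_le hsr with h | h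
    · exact h
    · rcases h'.2.2 (σ p) h (hv.trans_le hss) with hc | hc
      · simp only [Equiv.symm_apply_apply] at hc
        exact absurd hc (not_lt.mpr hrp)
      · simp only [Equiv.symm_apply_apply] at hc
        exact absurd hc (not_lt.mpr (hpq.trans_le hqs).le)
  have hrp' : r = p := σ.injective hr
  subst hrp'
  refine ⟨rfl, σ.injective ?_⟩
  rcases eq_or_lt_of_le hss with h | h
  · exact h.symm
  · rcases h'.2.2 (σ q) hv h with hc | hc
    · simp only [Equiv.symm_apply_apply] at hc
      exact absurd hc (not_lt.mpr hpq.le)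
    · simp only [Equiv.symm_apply_apply] at hc
      exact absurd hc (not_lt.mpr hqs)

lemma slope_max_down {n : ℕ} (σ : Equiv.Perm (Fin n)) (p q : Fin n)
    (hpq : p < q) (hv : σ q < σ p) :
    ∀ r s : Fin n, EmptyRectDown σ r s → slopeLeDown σ p q r s → r = p ∧ s = q := by
  intro r s h' hle
  obtain ⟨hrp, hqs, hss, hsr⟩ := hle
  have hr : σ r = σ p := by
    rcases eq_or_lt_of_le hsr with h | h
    · exact h.symm
    · rcases h'.2.2 (σ p) (hss.trans_lt hv) h with hc | hc
      · simp only [Equiv.symm_apply_apply] at hc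
        exact absurd hc (not_lt.mpr hrp)
      · simp only [Equiv.symm_apply_apply] at hc
        exact absurd hc (not_lt.mpr (hpq.trans_le hqs).le)
  have hrp' : r = p := σ.injective hr
  subst hrp'
  refine ⟨rfl, σ.injective ?_⟩
  rcases eq_or_lt_of_le hss with h | h
  · exact h
  · rcases h'.2.2 (σ q) h hv with hc | hc
    · simp only [Equiv.symm_apply_apply] at hc
      exact absurd hc (not_lt.mpr hpq.le)
    · simp only [Equiv.symm_apply_apply] at hc
      exact absurd hc (not_lt.mpr hqs)
/-- if the arc ideal of an essential congruence excludes a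
subarc-minimal arc `α = (i, j, A, B)` with `A ≠ ∅ ≠ B`, `a = max A`, `b = min B`,
then the four indicated subarcs of `α` belong to the ideal, and the insertion of
the permutation whose noncrossing arc diagram is `{α}` (the permutation listing
`Iio i ∪ A ∪ {j}` increasingly, then the remaining values increasingly) produces
the cover relations `a ≺ i`, `a ≺ j`, `i ≺ b`, `j ≺ b`; in particular this Hasse
diagram is not a tree. -/
theorem stmt8 {n : ℕ} (I : Set (Arc n))
    (hI : IsArcIdeal I) (hess : EssentialIdeal I)
    (α : Arc n) (hmin : MinNonArc I α) (a b : Fin n)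
    (ha : a ∈ α.A) (hamax : ∀ x ∈ α.A, x ≤ a)
    (hb : b ∈ α.B) (hbmin : ∀ x ∈ α.B, b ≤ x) :
    ((∃ β ∈ I, β.a = α.a ∧ β.b = a ∧
        β.A = α.A ∩ Finset.Ioo α.a a ∧ β.B = α.B ∩ Finset.Ioo α.a a) ∧
     (∃ β ∈ I, β.a = a ∧ β.b = α.b ∧
        β.A = ∅ ∧ β.B = α.B ∩ Finset.Ioo a α.b) ∧
     (∃ β ∈ I, β.a = α.a ∧ β.b = b ∧
        β.A = α.A ∩ Finset.Ioo α.a b ∧ β.B = ∅) ∧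
     (∃ β ∈ I, β.a = b ∧ β.b = α.b ∧
        β.A = α.A ∩ Finset.Ioo b α.b ∧ β.B = α.B ∩ Finset.Ioo b α.b)) ∧
    (∀ σ : Equiv.Perm (Fin n),
      (∀ u v : Fin n, u ∈ Finset.Iio α.a ∪ α.A ∪ {α.b} →
        v ∉ Finset.Iio α.a ∪ α.A ∪ {α.b} → σ.symm u < σ.symm v) →
      (∀ u v : Fin n, (u ∈ Finset.Iio α.a ∪ α.A ∪ {α.b} ↔
        v ∈ Finset.Iio α.a ∪ α.A ∪ {α.b}) → (σ.symm u < σ.symm v ↔ u < v)) →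
      insEdge I σ a α.a ∧ insEdge I σ a α.b ∧
      insEdge I σ α.a b ∧ insEdge I σ α.b b ∧
      ¬ (dirGraph (insEdge I σ)).IsTree) := by

  have hIooA : ∀ x ∈ α.A, α.a < x ∧ x < α.b := by
    intro x hx
    have hx' : x ∈ Finset.Ioo α.a α.b := α.hunion ▸ Finset.mem_union_left _ hx
    exact Finset.mem_Ioo.mp hx'
  have hIooB : ∀ x ∈ α.B, α.a < x ∧ x < α.b := by
    intro x hx
    have hx' : x ∈ Finset.Ioo α.a α.b := α.hunion ▸ Finset.mem_union_right _ hx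
    exact Finset.mem_Ioo.mp hx'
  have hAB : ∀ x : Fin n, α.a < x → x < α.b → x ∈ α.A ∨ x ∈ α.B := by
    intro x h1 h2
    exact Finset.mem_union.mp (α.hunion.symm ▸ Finset.mem_Ioo.mpr ⟨h1, h2⟩)
  obtain ⟨hia, haj⟩ := hIooA a ha
  obtain ⟨hib, hbj⟩ := hIooB b hb
  have hne_ab : a ≠ b := fun h => Finset.disjoint_left.mp α.hdisj ha (by rw [h]; exact hb)
  constructor
  · refine ⟨?_, ?_, ?_, ?_⟩
    · -- β₁ = (α.a, a, A∩Ioo, B∩Ioo)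
      refine ⟨⟨α.a, a, α.A ∩ Finset.Ioo α.a a, α.B ∩ Finset.Ioo α.a a, hia,
        α.hdisj.mono Finset.inter_subset_left Finset.inter_subset_left, ?_⟩,
        ?_, rfl, rfl, rfl, rfl⟩
      · rw [← Finset.union_inter_distrib_right, α.hunion, Finset.inter_eq_right]
        exact Finset.Ioo_subset_Ioo le_rfl haj.le
      · exact mem_of_subarc_ne hmin
          ⟨le_rfl, haj.le, Finset.inter_subset_left, Finset.inter_subset_left⟩
          (fun h => haj.ne (congrArg Arc.b h))
    · -- β₂ = (a, α.b, ∅, B∩Ioo)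
      refine ⟨⟨a, α.b, ∅, α.B ∩ Finset.Ioo a α.b, haj, Finset.disjoint_empty_left _, ?_⟩,
        ?_, rfl, rfl, rfl, rfl⟩
      · rw [Finset.empty_union, Finset.inter_eq_right]
        intro v hv
        obtain ⟨hv1, hv2⟩ := Finset.mem_Ioo.mp hv
        rcases hAB v (hia.trans hv1) hv2 with h | h
        · exact absurd (hamax v h) (not_le.mpr hv1)
        · exact h
      · exact mem_of_subarc_ne hmin
          ⟨hia.le, le_rfl, Finset.empty_subset _, Finset.inter_subset_left⟩
          (fun h => hia.ne' (congrArg Arc.a h))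
    · -- β₃ = (α.a, b, A∩Ioo, ∅)
      refine ⟨⟨α.a, b, α.A ∩ Finset.Ioo α.a b, ∅, hib, Finset.disjoint_empty_right _, ?_⟩,
        ?_, rfl, rfl, rfl, rfl⟩
      · rw [Finset.union_empty, Finset.inter_eq_right]
        intro v hv
        obtain ⟨hv1, hv2⟩ := Finset.mem_Ioo.mp hv
        rcases hAB v hv1 (hv2.trans hbj) with h | h
        · exact h
        · exact absurd (hbmin v h) (not_le.mpr hv2)
      · exact mem_of_subarc_ne hmin
          ⟨le_rfl, hbj.le, Finset.inter_subset_left, Finset.empty_subset _⟩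
          (fun h => hbj.ne (congrArg Arc.b h))
    · -- β₄ = (b, α.b, A∩Ioo, B∩Ioo)
      refine ⟨⟨b, α.b, α.A ∩ Finset.Ioo b α.b, α.B ∩ Finset.Ioo b α.b, hbj,
        α.hdisj.mono Finset.inter_subset_left Finset.inter_subset_left, ?_⟩,
        ?_, rfl, rfl, rfl, rfl⟩
      · rw [← Finset.union_inter_distrib_right, α.hunion, Finset.inter_eq_right]
        exact Finset.Ioo_subset_Ioo hib.le le_rfl
      · exact mem_of_subarc_ne hmin
          ⟨hib.le, le_rfl, Finset.inter_subset_left, Finset.inter_subset_left⟩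
          (fun h => hib.ne' (congrArg Arc.a h))
  · intro σ hσ1 hσ2
    set S : Finset (Fin n) := Finset.Iio α.a ∪ α.A ∪ {α.b} with hSdef
    have hjS : α.b ∈ S := Finset.mem_union_right _ (Finset.mem_singleton_self _)
    have hAS : ∀ x ∈ α.A, x ∈ S := fun x hx =>
      Finset.mem_union_left _ (Finset.mem_union_right _ hx)
    have haS : a ∈ S := hAS a ha
    have hiS : α.a ∉ S := by
      intro h
      rcases Finset.mem_union.mp h with h | h
      · rcases Finset.mem_union.mp h with h | h
        · exact lt_irrefl _ (Finset.mem_Iio.mp h)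
        · exact lt_irrefl _ (hIooA _ h).1
      · exact α.hab.ne (Finset.mem_singleton.mp h)
    have hBnS : ∀ x ∈ α.B, x ∉ S := by
      intro x hx h
      rcases Finset.mem_union.mp h with h | h
      · rcases Finset.mem_union.mp h with h | h
        · exact absurd (hIooB x hx).1 (not_lt.mpr (Finset.mem_Iio.mp h).le)
        · exact Finset.disjoint_left.mp α.hdisj h hx
      · exact (hIooB x hx).2.ne (Finset.mem_singleton.mp h)
    have hbnS : b ∉ S := hBnS b hb
    have hlt : ∀ u v : Fin n, u ∈ S → v ∈ S → u < v → σ.symm u < σ.symm v :=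
      fun u v hu hv h => (hσ2 u v (iff_of_true hu hv)).mpr h
    have hlt' : ∀ u v : Fin n, u ∉ S → v ∉ S → u < v → σ.symm u < σ.symm v :=
      fun u v hu hv h => (hσ2 u v (iff_of_false hu hv)).mpr h
    -- Edge 1 : a ≺ α.a (descending pair (σ⁻¹a, σ⁻¹α.a))
    have hE1 : insEdge I σ a α.a := by
      refine ⟨σ.symm a, σ.symm α.a, (σ.apply_symm_apply a).symm,
        (σ.apply_symm_apply α.a).symm, Or.inr ?_⟩
      have hpq : σ.symm a < σ.symm α.a := hσ1 a α.a haS hiS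
      have hrect : EmptyRectDown σ (σ.symm a) (σ.symm α.a) := by
        refine ⟨hpq, by simpa using hia, ?_⟩
        intro v hv1 hv2
        simp only [Equiv.apply_symm_apply] at hv1 hv2
        rcases hAB v hv1 (hv2.trans haj) with h | h
        · exact Or.inl (hlt v a (hAS v h) haS hv2)
        · exact Or.inr (hlt' α.a v hiS (hBnS v h) hv1)
      refine ⟨hrect, ?_,
        fun r s h' _ hle => slope_max_down σ _ _ hpq (by simpa using hia) r s h' hle⟩
      refine mem_of_subarc_ne hmin ⟨?_, ?_, ?_, ?_⟩ ?_
      · simp [arcDown]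
      · simpa [arcDown] using haj.le
      · intro v hv
        simp only [arcDown, Finset.mem_filter, Finset.mem_Ioo, Equiv.apply_symm_apply] at hv
        obtain ⟨⟨hv1, hv2⟩, hv3⟩ := hv
        rcases hAB v hv1 (hv2.trans haj) with h | h
        · exact h
        · exact absurd hv3 (lt_asymm (hpq.trans (hlt' α.a v hiS (hBnS v h) hv1)))
      · intro v hv
        simp only [arcDown, Finset.mem_filter, Finset.mem_Ioo, Equiv.apply_symm_apply] at hv
        obtain ⟨⟨hv1, hv2⟩, hv3⟩ := hv
        rcases hAB v hv1 (hv2.trans haj) with h | h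
        · exact absurd (hσ1 v α.a (hAS v h) hiS) (lt_asymm hv3)
        · exact h
      · intro h
        have hb' := congrArg Arc.b h
        simp only [arcDown, Equiv.apply_symm_apply] at hb'
        exact haj.ne hb'
    -- Edge 2 : a ≺ α.b (ascending pair (σ⁻¹a, σ⁻¹α.b))
    have hE2 : insEdge I σ a α.b := by
      refine ⟨σ.symm a, σ.symm α.b, (σ.apply_symm_apply a).symm,
        (σ.apply_symm_apply α.b).symm, Or.inl ?_⟩
      have hpq : σ.symm a < σ.symm α.b := hlt a α.b haS hjS haj
      have hBv : ∀ v : Fin n, a < v → v < α.b → v ∈ α.B := by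
        intro v hv1 hv2
        rcases hAB v (hia.trans hv1) hv2 with h | h
        · exact absurd (hamax v h) (not_le.mpr hv1)
        · exact h
      have hrect : EmptyRectUp σ (σ.symm a) (σ.symm α.b) := by
        refine ⟨hpq, by simpa using haj, ?_⟩
        intro v hv1 hv2
        simp only [Equiv.apply_symm_apply] at hv1 hv2
        exact Or.inr (hσ1 α.b v hjS (hBnS v (hBv v hv1 hv2)))
      refine ⟨hrect, ?_,
        fun r s h' _ hle => slope_max_up σ _ _ hpq (by simpa using haj) r s h' hle⟩
      refine mem_of_subarc_ne hmin ⟨?_, ?_, ?_, ?_⟩ ?_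
      · simpa [arcUp] using hia.le
      · simp [arcUp]
      · intro v hv
        simp only [arcUp, Finset.mem_filter, Finset.mem_Ioo, Equiv.apply_symm_apply] at hv
        obtain ⟨⟨hv1, hv2⟩, hv3⟩ := hv
        exact absurd hv3
          (lt_asymm (hpq.trans (hσ1 α.b v hjS (hBnS v (hBv v hv1 hv2)))))
      · intro v hv
        simp only [arcUp, Finset.mem_filter, Finset.mem_Ioo, Equiv.apply_symm_apply] at hv
        exact hBv v hv.1.1 hv.1.2
      · intro h
        have ha' := congrArg Arc.a h
        simp only [arcUp, Equiv.apply_symm_apply] at ha'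
        exact hia.ne' ha'
    -- Edge 3 : α.a ≺ b (ascending pair (σ⁻¹α.a, σ⁻¹b))
    have hE3 : insEdge I σ α.a b := by
      refine ⟨σ.symm α.a, σ.symm b, (σ.apply_symm_apply α.a).symm,
        (σ.apply_symm_apply b).symm, Or.inl ?_⟩
      have hpq : σ.symm α.a < σ.symm b := hlt' α.a b hiS hbnS hib
      have hAv : ∀ v : Fin n, α.a < v → v < b → v ∈ α.A := by
        intro v hv1 hv2
        rcases hAB v hv1 (hv2.trans hbj) with h | h
        · exact h
        · exact absurd (hbmin v h) (not_le.mpr hv2)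
      have hrect : EmptyRectUp σ (σ.symm α.a) (σ.symm b) := by
        refine ⟨hpq, by simpa using hib, ?_⟩
        intro v hv1 hv2
        simp only [Equiv.apply_symm_apply] at hv1 hv2
        exact Or.inl (hσ1 v α.a (hAS v (hAv v hv1 hv2)) hiS)
      refine ⟨hrect, ?_,
        fun r s h' _ hle => slope_max_up σ _ _ hpq (by simpa using hib) r s h' hle⟩
      refine mem_of_subarc_ne hmin ⟨?_, ?_, ?_, ?_⟩ ?_
      · simp [arcUp]
      · simpa [arcUp] using hbj.le
      · intro v hv
        simp only [arcUp, Finset.mem_filter, Finset.mem_Ioo, Equiv.apply_symm_apply] at hv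
        exact hAv v hv.1.1 hv.1.2
      · intro v hv
        simp only [arcUp, Finset.mem_filter, Finset.mem_Ioo, Equiv.apply_symm_apply] at hv
        obtain ⟨⟨hv1, hv2⟩, hv3⟩ := hv
        exact absurd hv3
          (lt_asymm ((hσ1 v α.a (hAS v (hAv v hv1 hv2)) hiS).trans hpq))
      · intro h
        have hb' := congrArg Arc.b h
        simp only [arcUp, Equiv.apply_symm_apply] at hb'
        exact hbj.ne hb'
    -- Edge 4 : α.b ≺ b (descending pair (σ⁻¹α.b, σ⁻¹b))
    have hE4 : insEdge I σ α.b b := by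
      refine ⟨σ.symm α.b, σ.symm b, (σ.apply_symm_apply α.b).symm,
        (σ.apply_symm_apply b).symm, Or.inr ?_⟩
      have hpq : σ.symm α.b < σ.symm b := hσ1 α.b b hjS hbnS
      have hrect : EmptyRectDown σ (σ.symm α.b) (σ.symm b) := by
        refine ⟨hpq, by simpa using hbj, ?_⟩
        intro v hv1 hv2
        simp only [Equiv.apply_symm_apply] at hv1 hv2
        rcases hAB v (hib.trans hv1) hv2 with h | h
        · exact Or.inl (hlt v α.b (hAS v h) hjS (hIooA v h).2)
        · exact Or.inr (hlt' b v hbnS (hBnS v h) hv1)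
      refine ⟨hrect, ?_,
        fun r s h' _ hle => slope_max_down σ _ _ hpq (by simpa using hbj) r s h' hle⟩
      refine mem_of_subarc_ne hmin ⟨?_, ?_, ?_, ?_⟩ ?_
      · simpa [arcDown] using hib.le
      · simp [arcDown]
      · intro v hv
        simp only [arcDown, Finset.mem_filter, Finset.mem_Ioo, Equiv.apply_symm_apply] at hv
        obtain ⟨⟨hv1, hv2⟩, hv3⟩ := hv
        rcases hAB v (hib.trans hv1) hv2 with h | h
        · exact h
        · exact absurd hv3 (lt_asymm (hpq.trans (hlt' b v hbnS (hBnS v h) hv1)))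
      · intro v hv
        simp only [arcDown, Finset.mem_filter, Finset.mem_Ioo, Equiv.apply_symm_apply] at hv
        obtain ⟨⟨hv1, hv2⟩, hv3⟩ := hv
        rcases hAB v (hib.trans hv1) hv2 with h | h
        · exact absurd (hlt v α.b (hAS v h) hjS (hIooA v h).2) (lt_asymm (hpq.trans hv3))
        · exact h
      · intro h
        have ha' := congrArg Arc.a h
        simp only [arcDown, Equiv.apply_symm_apply] at ha'
        exact hib.ne' ha'
    refine ⟨hE1, hE2, hE3, hE4, ?_⟩
    intro htree
    have hadj1 : (dirGraph (insEdge I σ)).Adj α.a a := ⟨hia.ne, Or.inr hE1⟩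
    have hadj2 : (dirGraph (insEdge I σ)).Adj a α.b := ⟨haj.ne, Or.inl hE2⟩
    have hadj3 : (dirGraph (insEdge I σ)).Adj α.b b := ⟨hbj.ne', Or.inl hE4⟩
    have hadj4 : (dirGraph (insEdge I σ)).Adj b α.a := ⟨hib.ne', Or.inr hE3⟩
    let c : (dirGraph (insEdge I σ)).Walk α.a α.a :=
      SimpleGraph.Walk.cons hadj1 (SimpleGraph.Walk.cons hadj2
        (SimpleGraph.Walk.cons hadj3 (SimpleGraph.Walk.cons hadj4 SimpleGraph.Walk.nil)))
    have n1 : α.a ≠ a := hia.ne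
    have n1' : a ≠ α.a := hia.ne'
    have n2 : α.a ≠ α.b := α.hab.ne
    have n2' : α.b ≠ α.a := α.hab.ne'
    have n3 : α.a ≠ b := hib.ne
    have n3' : b ≠ α.a := hib.ne'
    have n4 : a ≠ α.b := haj.ne
    have n4' : α.b ≠ a := haj.ne'
    have n5 : α.b ≠ b := hbj.ne'
    have n5' : b ≠ α.b := hbj.ne
    have n6 : a ≠ b := hne_ab
    have n6' : b ≠ a := hne_ab.symm
    have hcyc : c.IsCycle := by
      rw [SimpleGraph.Walk.isCycle_def]
      refine ⟨?_, by simp [c], ?_⟩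
      · rw [SimpleGraph.Walk.isTrail_def]
        simp [c, SimpleGraph.Walk.edges]
        tauto
      · simp [c]
        tauto
    exact htree.IsAcyclic c hcyc
end
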